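/- arXiv:2410.11754 — 3 statements merged into one kernel-verified Lean document; each statement's English description precedes it below -/
import Mathlib

section
/- Let Γ, B, and C be countable groups and suppose the p.m.p. actions B ↷ (Y,ν) and C ↷ (Z,η) on standard probability spaces are orbit equivalent, witnessed by a measure space isomorphism φ:(Y,ν)→(Z,η) with φ(B·y) = C·φ(y) for a.e. y ∈ Y. Then the coordinatewise map φ^Γ: (Y^Γ, ν^Γ) → (Z^Γ, η^Γ), defined by (φ^Γ(y))_γ = φ(y_γ), is an orbit equivalence between the associated wreath product actions B≀Γ ↷ (Y^Γ, ν^Γ) and C≀Γ ↷ (Z^Γ, η^Γ); in particular, these wreath product actions are orbit equivalent. -/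
/-!  Common definitions: wreath products, measured group actions, orbit equivalence,
measure equivalence, measurable splittings, cocycle superrigidity, and cofinitely
equivariant maps.  -/

open MeasureTheory Function Filter Set
open scoped ENNReal

namespace OEW


/-! ### Restricted direct sums and wreath products of groups -/

/-- The restricted direct sum `⊕_V B`: the subgroup of `V → B` consisting of finitely
supported functions (support = coordinates where the value is not `1`). -/
def dsum (V B : Type) [Group B] : Subgroup (V → B) where
  carrier := {f | (Function.mulSupport f).Finite}
  one_mem' := by
    simp
  mul_mem' := fun {f g} hf hg =>
    Set.Finite.subset (Set.Finite.union hf hg) (Function.mulSupport_mul f g)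
  inv_mem' := fun {f} hf => by simpa [Function.mulSupport_inv] using hf

variable {V B Γ : Type}

/-- The shift of a finitely supported function by `γ`. -/
def shiftSubtype [Group B] [Group Γ] [MulAction Γ V] (γ : Γ) (f : dsum V B) : dsum V B :=
  ⟨fun v => (f : V → B) (γ⁻¹ • v), by
    have h : (Function.mulSupport fun v => (f : V → B) (γ⁻¹ • v)) ⊆
        (fun v => γ⁻¹ • v) ⁻¹' Function.mulSupport (f : V → B) := fun v hv => hv
    exact Set.Finite.subset
      (Set.Finite.preimage ((MulAction.injective (γ⁻¹ : Γ)).injOn) f.2) h⟩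

/-- The shift by `γ` as an automorphism of the restricted direct sum. -/
def shiftEquiv [Group B] [Group Γ] [MulAction Γ V] (γ : Γ) : dsum V B ≃* dsum V B where
  toFun := shiftSubtype γ
  invFun := shiftSubtype γ⁻¹
  left_inv f := Subtype.ext (funext fun v => by simp [shiftSubtype])
  right_inv f := Subtype.ext (funext fun v => by simp [shiftSubtype])
  map_mul' f g := rfl

/-- The left shift action of `Γ` on `⊕_V B` as a homomorphism into the automorphism group. -/
def shiftHom (V B Γ : Type) [Group B] [Group Γ] [MulAction Γ V] :
    Γ →* MulAut (dsum V B) where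
  toFun γ := shiftEquiv γ
  map_one' := MulEquiv.ext fun f => Subtype.ext (funext fun v => by
    simp [shiftEquiv, shiftSubtype])
  map_mul' γ₁ γ₂ := MulEquiv.ext fun f => Subtype.ext (funext fun v => by
    simp [shiftEquiv, shiftSubtype, mul_smul] <;> rfl)

/-- The (restricted) permutational wreath product `B ≀_V Γ = (⊕_V B) ⋊ Γ`. -/
abbrev pwreath (V B Γ : Type) [Group B] [Group Γ] [MulAction Γ V] : Type :=
  SemidirectProduct (dsum V B) Γ (shiftHom V B Γ)

/-- The (restricted) regular wreath product `B ≀ Γ = (⊕_Γ B) ⋊ Γ`. -/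
abbrev wreath (B Γ : Type) [Group B] [Group Γ] : Type := pwreath Γ B Γ


/-- The shift ("generalized Bernoulli") action on `V → X`. -/
def shiftS [Group Γ] [MulAction Γ V] (γ : Γ) (x : V → X) : V → X :=
  fun v => x (γ⁻¹ • v)

variable {V B C Γ X Y Z : Type}

/-- The wreath product action: given an action `β : B → X → X`, the induced action of the
wreath product `B ≀_V Γ` on `V → X`. -/
def wreathSmul [Group B] [Group Γ] [MulAction Γ V] (β : B → X → X)
    (g : pwreath V B Γ) (x : V → X) : V → X :=
  fun v => β ((g.left : V → B) v) (x (g.right⁻¹ • v))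

/-- The coordinatewise action of the restricted direct sum `⊕_V B` on `V → X`. -/
def dsumSmul [Group B] (β : B → X → X) (b : dsum V B) (x : V → X) : V → X :=
  fun v => β ((b : V → B) v) (x v)

/-! ### Measured group actions, given by explicit action maps -/

/-- `a` is a measure preserving group action of `G` on `(X, μ)`. -/
def IsMpAction {G : Type} [Group G] [MeasurableSpace X] (a : G → X → X) (μ : Measure X) : Prop :=
  (∀ x, a 1 x = x) ∧ (∀ g h x, a (g * h) x = a g (a h x)) ∧ ∀ g, MeasurePreserving (a g) μ μ

/-- A probability measure preserving (p.m.p.) action. -/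
def IsPmpAction {G : Type} [Group G] [MeasurableSpace X] (a : G → X → X) (μ : Measure X) : Prop :=
  IsProbabilityMeasure μ ∧ IsMpAction a μ

/-- The action is (essentially) free. -/
def IsFreeAction {G : Type} [Group G] [MeasurableSpace X] (a : G → X → X) (μ : Measure X) : Prop :=
  ∀ᵐ x ∂μ, ∀ g : G, a g x = x → g = 1

/-- The action is ergodic: every invariant measurable set is null or conull. -/
def IsErgodicAction {G : Type} [Group G] [MeasurableSpace X] (a : G → X → X) (μ : Measure X) :
    Prop :=
  ∀ A : Set X, MeasurableSet A → (∀ g : G, a g ⁻¹' A = A) → μ A = 0 ∨ μ Aᶜ = 0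

/-- The action is totally ergodic: every infinite subgroup acts ergodically. -/
def IsTotallyErgodic {G : Type} [Group G] [MeasurableSpace X] (a : G → X → X) (μ : Measure X) :
    Prop :=
  ∀ H : Subgroup G, (H : Set G).Infinite → IsErgodicAction (fun (h : H) x => a (h : G) x) μ

/-- `φ` is a measure space isomorphism from `(X,μ)` to `(Y,ν)`: a measure preserving
measurable map admitting an a.e. two-sided measurable inverse. -/
def IsMeasureIso [MeasurableSpace X] [MeasurableSpace Y] (μ : Measure X) (ν : Measure Y)
    (φ : X → Y) : Prop :=
  MeasurePreserving φ μ ν ∧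
    ∃ ψ : Y → X, Measurable ψ ∧ (∀ᵐ x ∂μ, ψ (φ x) = x) ∧ (∀ᵐ y ∂ν, φ (ψ y) = y)

/-- `φ` is an orbit equivalence between the actions `a : G → X → X` and `b : H → Y → Y`:
a measure space isomorphism with `φ(G⬝x) = H⬝φ(x)` for a.e. `x`. -/
def IsOrbitEquivalence {G H : Type} [MeasurableSpace X] [MeasurableSpace Y]
    (a : G → X → X) (b : H → Y → Y) (μ : Measure X) (ν : Measure Y) (φ : X → Y) : Prop :=
  IsMeasureIso μ ν φ ∧
    ∀ᵐ x ∂μ, (∀ g : G, ∃ h : H, φ (a g x) = b h (φ x)) ∧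
      (∀ h : H, ∃ g : G, b h (φ x) = φ (a g x))

/-- The two actions are orbit equivalent. -/
def OrbitEquivalentActions {G H : Type} [MeasurableSpace X] [MeasurableSpace Y]
    (a : G → X → X) (b : H → Y → Y) (μ : Measure X) (ν : Measure Y) : Prop :=
  ∃ φ : X → Y, IsOrbitEquivalence a b μ ν φ

/-- `m` is the product, over the index set `ι`, of copies of the probability measure `ν`. -/
def IsProductMeasure {ι : Type} [MeasurableSpace X] (ν : Measure X) (m : Measure (ι → X)) :
    Prop :=
  IsProbabilityMeasure m ∧
    ∀ (s : Finset ι) (A : ι → Set X), (∀ i, MeasurableSet (A i)) →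
      m {x | ∀ i ∈ s, x i ∈ A i} = ∏ i ∈ s, ν (A i)

/-- A group is amenable if it admits a left translation invariant, finitely additive
probability measure defined on all of its subsets. -/
def IsAmenable (G : Type) [Group G] : Prop :=
  ∃ m : Set G → ℝ,
    (∀ A : Set G, 0 ≤ m A) ∧ m Set.univ = 1 ∧
    (∀ A B : Set G, Disjoint A B → m (A ∪ B) = m A + m B) ∧
    ∀ (g : G) (A : Set G), m ((g * ·) '' A) = m A

/-! ### Bundled p.m.p. actions on standard probability spaces -/

/-- A p.m.p. action of `G` on a standard probability space, bundled. -/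
structure PmpSystem (G : Type) [Group G] : Type 1 where
  (X : Type)
  [mX : MeasurableSpace X]
  (μ : Measure X)
  (act : G → X → X)
  (standardBorel : StandardBorelSpace X)
  (isProb : IsProbabilityMeasure μ)
  (pmp : IsMpAction act μ)

/-- The bundled action is (essentially) free. -/
def PmpSystem.Free {G : Type} [Group G] (S : PmpSystem G) : Prop :=
  ∀ᵐ x ∂S.μ, ∀ g : G, S.act g x = x → g = 1

/-- The bundled action is ergodic. -/
def PmpSystem.ErgodicAct {G : Type} [Group G] (S : PmpSystem G) : Prop :=
  ∀ A : Set S.X, MeasurableSet[S.mX] A → (∀ g : G, S.act g ⁻¹' A = A) → S.μ A = 0 ∨ S.μ Aᶜ = 0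

/-- Two countable groups are orbit equivalent if they admit orbit equivalent free ergodic
p.m.p. actions on standard probability spaces. -/
def GroupsOrbitEquivalent (G H : Type) [Group G] [Group H] : Prop :=
  ∃ (S : PmpSystem G) (T : PmpSystem H),
    letI := S.mX
    letI := T.mX
    S.Free ∧ T.Free ∧ S.ErgodicAct ∧ T.ErgodicAct ∧
      OrbitEquivalentActions S.act T.act S.μ T.μ

/-! ### Measure equivalence -/

/-- `s` is a measurable fundamental domain for the action `a` on `(Ω, m)`. -/
def IsFundDomain {G Ω : Type} [MeasurableSpace Ω] (a : G → Ω → Ω) (s : Set Ω)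
    (m : Measure Ω) : Prop :=
  MeasurableSet s ∧ (∀ᵐ x ∂m, ∃ g : G, a g x ∈ s) ∧
    ∀ g g' : G, g ≠ g' → m (a g '' s ∩ a g' '' s) = 0

/-- A measure equivalence coupling of `G` with `H`: commuting measure preserving actions on
a standard nonzero σ-finite measure space, each admitting a finite measure measurable
fundamental domain. -/
structure MECoupling (G H : Type) [Group G] [Group H] : Type 1 where
  (Ω : Type)
  [mΩ : MeasurableSpace Ω]
  (m : Measure Ω)
  (aG : G → Ω → Ω)
  (aH : H → Ω → Ω)
  (standardBorel : StandardBorelSpace Ω)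
  (sigmaFinite : SigmaFinite m)
  (nonzero : m ≠ 0)
  (mpG : IsMpAction aG m)
  (mpH : IsMpAction aH m)
  (comm : ∀ (g : G) (h : H) (x : Ω), aG g (aH h x) = aH h (aG g x))
  (FG : Set Ω)
  (FH : Set Ω)
  (fundG : IsFundDomain aG FG m)
  (fundH : IsFundDomain aH FH m)
  (finG : m FG < ⊤)
  (finH : m FH < ⊤)

/-- `G` and `H` are measure equivalent. -/
def MeasureEquivalent (G H : Type) [Group G] [Group H] : Prop :=
  Nonempty (MECoupling G H)

/-- `G` and `H` admit a measure equivalence coupling of coupling index `α`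
(the ratio of the measures of the `H`- and `G`-fundamental domains). -/
def MeasureEquivalentWithIndex (G H : Type) [Group G] [Group H] (α : ℝ≥0∞) : Prop :=
  ∃ c : MECoupling G H, c.m c.FH = α * c.m c.FG



variable {X : Type}

/-! ### Countable Borel equivalence relations and measurable splittings -/

/-- `R` is a p.m.p. countable Borel equivalence relation on `(X, μ)`: every Borel bijection
between Borel subsets whose graph is contained in `R` preserves `μ`. -/
def IsPmpCBER [MeasurableSpace X] (R : X → X → Prop) (μ : Measure X) : Prop :=
  Equivalence R ∧ MeasurableSet {p : X × X | R p.1 p.2} ∧ (∀ x, {y | R x y}.Countable) ∧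
    ∀ (f : X → X) (A B : Set X), Measurable f → MeasurableSet A → MeasurableSet B →
      Set.BijOn f A B → (∀ x ∈ A, R x (f x)) →
      ∀ C : Set X, MeasurableSet C → C ⊆ B → μ (A ∩ f ⁻¹' C) = μ C

/-- The relation `R` is ergodic with respect to `μ`. -/
def IsErgodicRel [MeasurableSpace X] (R : X → X → Prop) (μ : Measure X) : Prop :=
  ∀ A : Set X, MeasurableSet A → (∀ x y, R x y → (x ∈ A ↔ y ∈ A)) → μ A = 0 ∨ μ Aᶜ = 0

/-- The subrelations `R₀` and `R₁` are freely independent: there is no reduced cycle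
alternating between nontrivial `R₀`-steps and `R₁`-steps. -/
def FreelyIndepRel (R₀ R₁ : X → X → Prop) : Prop :=
  ¬ ∃ (n : ℕ) (i : ℕ → Fin 2) (x : ℕ → X),
      2 ≤ n ∧ x n = x 0 ∧ (∀ j < n, x j ≠ x (j + 1)) ∧
      (∀ j, j + 1 < n → i j ≠ i (j + 1)) ∧
      (∀ j < n, if i j = 0 then R₀ (x j) (x (j + 1)) else R₁ (x j) (x (j + 1)))

/-- `R` splits as the free product `R = R₀ ∗ R₁`: `R₀` and `R₁` are freely independent
subequivalence relations generating `R`. -/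
def SplitsAs (R R₀ R₁ : X → X → Prop) : Prop :=
  Equivalence R₀ ∧ Equivalence R₁ ∧ (∀ x y, R₀ x y → R x y) ∧ (∀ x y, R₁ x y → R x y) ∧
    FreelyIndepRel R₀ R₁ ∧
    ∀ x y, R x y ↔ Relation.EqvGen (fun u v => R₀ u v ∨ R₁ u v) x y

/-- The splitting `R = R₀ ∗ R₁` is inessential on the (invariant) set `C`. -/
def InessentialOn [MeasurableSpace X] (R R₀ R₁ : X → X → Prop) (C : Set X) : Prop :=
  ∃ X₀ X₁ : Set X, MeasurableSet X₀ ∧ MeasurableSet X₁ ∧ X₀ ∪ X₁ = C ∧ Disjoint X₀ X₁ ∧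
    (∀ x ∈ C, ∀ y ∈ C, R x y → (x ∈ X₀ ↔ y ∈ X₀)) ∧
    ∃ U₀ U₁ : Set X, MeasurableSet U₀ ∧ MeasurableSet U₁ ∧ U₀ ⊆ X₀ ∧ U₁ ⊆ X₁ ∧
      (∀ x ∈ X₀, ∃ y ∈ U₀, R x y) ∧ (∀ x ∈ X₁, ∃ y ∈ U₁, R x y) ∧
      (∀ x ∈ U₀, ∀ y ∈ U₀, (R x y ↔ R₀ x y)) ∧ (∀ x ∈ U₁, ∀ y ∈ U₁, (R x y ↔ R₁ x y))

/-- The splitting is `μ`-essential: there is no `R`-invariant `μ`-conull Borel set on which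
it is inessential. -/
def MuEssential [MeasurableSpace X] (μ : Measure X) (R R₀ R₁ : X → X → Prop) : Prop :=
  ¬ ∃ C : Set X, MeasurableSet C ∧ μ Cᶜ = 0 ∧ (∀ x y, R x y → (x ∈ C ↔ y ∈ C)) ∧
      InessentialOn R R₀ R₁ C

/-- `R = R₀ ∗ R₁` is a `μ`-essential splitting. -/
def EssentialSplitting [MeasurableSpace X] (μ : Measure X) (R R₀ R₁ : X → X → Prop) : Prop :=
  SplitsAs R R₀ R₁ ∧ MuEssential μ R R₀ R₁

/-- The orbit equivalence relation of an action given by `a`. -/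
def orbitRelOf {G : Type} (a : G → X → X) : X → X → Prop := fun x y => ∃ g : G, a g x = y

/-- The restriction of the relation `R` to the set `C` (extended by equality off `C`). -/
def restrictRel (R : X → X → Prop) (C : Set X) : X → X → Prop :=
  fun x y => x = y ∨ (R x y ∧ x ∈ C ∧ y ∈ C)

/-- `R` is hyperfinite: an increasing union of Borel equivalence relations with finite
classes. -/
def IsHyperfinite [MeasurableSpace X] (R : X → X → Prop) : Prop :=
  ∃ S : ℕ → X → X → Prop,
    (∀ n, Equivalence (S n)) ∧ (∀ n, MeasurableSet {p : X × X | S n p.1 p.2}) ∧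
    (∀ n x y, S n x y → S (n + 1) x y) ∧ (∀ n x, {y | S n x y}.Finite) ∧
    ∀ x y, R x y ↔ ∃ n, S n x y

/-- `R` is `μ`-amenable: off a `μ`-null set it is hyperfinite. -/
def MuAmenableRel [MeasurableSpace X] (R : X → X → Prop) (μ : Measure X) : Prop :=
  ∃ C : Set X, MeasurableSet C ∧ μ Cᶜ = 0 ∧ IsHyperfinite (restrictRel R C)

/-- `R` is `μ`-nowhere amenable: there is no positive measure Borel set on which the
restriction of `R` is amenable. -/
def MuNowhereAmenable [MeasurableSpace X] (R : X → X → Prop) (μ : Measure X) : Prop :=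
  ¬ ∃ A : Set X, MeasurableSet A ∧ 0 < μ A ∧
      ∃ C : Set X, MeasurableSet C ∧ C ⊆ A ∧ μ (A \ C) = 0 ∧
        IsHyperfinite (restrictRel R C)

/-- The symmetric irreflexive graph `E` has no cycles. -/
def HasNoGraphCycles (E : X → X → Prop) : Prop :=
  ¬ ∃ (n : ℕ) (x : ℕ → X), 3 ≤ n ∧ (∀ j < n, E (x j) (x (j + 1))) ∧ x n = x 0 ∧
      ∀ j < n, ∀ k < n, j ≠ k → x j ≠ x k

/-- `R` is treeable: it is generated by a Borel graphing whose connected components are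
acyclic. -/
def IsTreeable [MeasurableSpace X] (R : X → X → Prop) : Prop :=
  ∃ E : X → X → Prop,
    MeasurableSet {p : X × X | E p.1 p.2} ∧ (∀ x y, E x y → E y x) ∧ (∀ x, ¬ E x x) ∧
    (∀ x y, E x y → R x y) ∧ (∀ x y, R x y ↔ Relation.EqvGen E x y) ∧ HasNoGraphCycles E


/-- `Γ` admits an essential measurable splitting: some free p.m.p. action of `Γ` on a
standard probability space has orbit equivalence relation admitting a `μ`-essential
splitting (into Borel subequivalence relations). -/
def AdmitsEssentialMeasurableSplitting (Γ : Type) [Group Γ] : Prop :=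
  ∃ S : PmpSystem Γ, S.Free ∧
    ∃ R₀ R₁ : S.X → S.X → Prop,
      letI := S.mX
      MeasurableSet {p : S.X × S.X | R₀ p.1 p.2} ∧
      MeasurableSet {p : S.X × S.X | R₁ p.1 p.2} ∧
      EssentialSplitting S.μ (orbitRelOf S.act) R₀ R₁


variable {X Y Z : Type}

/-! ### Cocycles and superrigidity -/

/-- A measurable `L`-valued cocycle over the action `a`. -/
def IsCocycle {G L : Type} [Group G] [MeasurableSpace X] [Group L] [MeasurableSpace L]
    (a : G → X → X) (μ : Measure X) (c : G → X → L) : Prop :=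
  (∀ g : G, Measurable (c g)) ∧
    ∀ g h : G, ∀ᵐ x ∂μ, c (g * h) x = c g (a h x) * c h x

/-- Two cocycles are cohomologous. -/
def Cohomologous {G L : Type} [Group G] [MeasurableSpace X] [Group L] [MeasurableSpace L]
    (a : G → X → X) (μ : Measure X) (c₀ c₁ : G → X → L) : Prop :=
  ∃ f : X → L, Measurable f ∧ ∀ g : G, ∀ᵐ x ∂μ, f (a g x) * c₀ g x * (f x)⁻¹ = c₁ g x

/-- The action `a` is `L`-cocycle superrigid: every measurable `L`-valued cocycle is
cohomologous to a group homomorphism. -/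
def IsCocycleSuperrigid {G : Type} [Group G] [MeasurableSpace X]
    (L : Type) [Group L] [MeasurableSpace L] (a : G → X → X) (μ : Measure X) : Prop :=
  ∀ c : G → X → L, IsCocycle a μ c →
    ∃ ρ : G →* L, Cohomologous a μ c fun g _ => ρ g

/-- The action is `𝒢_ctble`-cocycle superrigid: `L`-cocycle superrigid for every countable
discrete group `L`. -/
def IsGctbleCocycleSuperrigid {G : Type} [Group G] [MeasurableSpace X]
    (a : G → X → X) (μ : Measure X) : Prop :=
  ∀ (L : Type) [Group L] [MeasurableSpace L] [MeasurableSingletonClass L],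
    Countable L → IsCocycleSuperrigid L a μ

/-- The action is strongly ergodic. -/
def IsStronglyErgodic {G : Type} [Group G] [MeasurableSpace X]
    (a : G → X → X) (μ : Measure X) : Prop :=
  ∀ A : ℕ → Set X, (∀ n, MeasurableSet (A n)) →
    (∀ g : G, Tendsto (fun n => μ (symmDiff (a g '' A n) (A n))) atTop (nhds 0)) →
    Tendsto (fun n => μ (A n) * μ (A n)ᶜ) atTop (nhds 0)

/-- Soficity of a group. -/
def IsSofic (G : Type) [Group G] : Prop :=
  ∀ (F : Finset G) (ε : ℝ), 0 < ε →
    ∃ (n : ℕ) (σ : G → Equiv.Perm (Fin n)),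
      (∀ g ∈ F, ∀ h ∈ F,
        (1 - ε) * n ≤ ((Finset.univ.filter fun i => σ (g * h) i = σ g (σ h i)).card : ℝ)) ∧
      ∀ g ∈ F, g ≠ 1 →
        (1 - ε) * n ≤ ((Finset.univ.filter fun i => σ g i ≠ i).card : ℝ)

/-! ### Internal free products -/

/-- `Γ` is the internal free product of its subgroups `Λ` and `H`: together they generate
`Γ` and no alternating product of nonidentity elements is the identity. -/
def IsInternalFreeProduct {Γ : Type} [Group Γ] (Λ H : Subgroup Γ) : Prop :=
  Λ ⊔ H = ⊤ ∧
    ∀ (n : ℕ) (w : Fin (n + 1) → Γ) (c : Fin (n + 1) → Bool),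
      (∀ i, w i ≠ 1) →
      (∀ i, if c i then w i ∈ Λ else w i ∈ H) →
      (∀ i : Fin n, c i.castSucc ≠ c i.succ) →
      (List.ofFn w).prod ≠ 1





/-! ### Cofinitely equivariant maps -/

/-- `x ∼_B y`: the functions differ in finitely many coordinates, and wherever they differ
the values lie in the same `B`-orbit. -/
def simRel (β : B → Y → Y) (x y : Γ → Y) : Prop :=
  {γ : Γ | x γ ≠ y γ}.Finite ∧ ∀ γ : Γ, x γ ≠ y γ → ∃ l : B, β l (x γ) = y γ

/-- `φ` is cofinitely equivariant with respect to the given actions of `B` and `C`. -/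
def CofinitelyEquivariant [Group Γ] [MeasurableSpace Y] (β : B → Y → Y) (χ : C → Z → Z)
    (νΓ : Measure (Γ → Y)) (φ : (Γ → Y) → (Γ → Z)) : Prop :=
  ∀ᵐ y ∂νΓ, ∀ x : Γ → Y, simRel β x y → ∀ γ : Γ,
    simRel χ (φ (shiftS γ x)) (shiftS γ (φ y))

/-- `φ` (with a.e. inverse `ψ`) is a bi-cofinitely equivariant measure space isomorphism. -/
def BiCofinitelyEquivariant [Group Γ] [MeasurableSpace Y] [MeasurableSpace Z]
    (β : B → Y → Y) (χ : C → Z → Z) (νΓ : Measure (Γ → Y)) (ηΓ : Measure (Γ → Z))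
    (φ : (Γ → Y) → (Γ → Z)) (ψ : (Γ → Z) → (Γ → Y)) : Prop :=
  MeasurePreserving φ νΓ ηΓ ∧ Measurable ψ ∧
    (∀ᵐ y ∂νΓ, ψ (φ y) = y) ∧ (∀ᵐ z ∂ηΓ, φ (ψ z) = z) ∧
    CofinitelyEquivariant β χ νΓ φ ∧ CofinitelyEquivariant χ β ηΓ ψ

/-! ### Stable orbit equivalence -/

/-- The actions `a` and `b` are stably orbit equivalent. -/
def StablyOrbitEquivalent {G H : Type} [MeasurableSpace X] [MeasurableSpace Y]
    (a : G → X → X) (b : H → Y → Y) (μ : Measure X) (ν : Measure Y) : Prop :=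
  ∃ (X₀ : Set X) (Y₀ : Set Y) (φ : X → Y),
    MeasurableSet X₀ ∧ MeasurableSet Y₀ ∧ 0 < μ X₀ ∧ 0 < ν Y₀ ∧
    (∀ᵐ x ∂μ.restrict X₀, φ x ∈ Y₀) ∧
    MeasurePreserving φ ((μ X₀)⁻¹ • μ.restrict X₀) ((ν Y₀)⁻¹ • ν.restrict Y₀) ∧
    (∃ ψ : Y → X, Measurable ψ ∧ (∀ᵐ x ∂μ.restrict X₀, ψ (φ x) = x) ∧
      (∀ᵐ y ∂ν.restrict Y₀, φ (ψ y) = y)) ∧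
    ∀ᵐ x ∂μ.restrict X₀,
      (∀ g : G, a g x ∈ X₀ → ∃ h : H, φ (a g x) = b h (φ x)) ∧
      (∀ h : H, b h (φ x) ∈ Y₀ → ∃ g : G, a g x ∈ X₀ ∧ φ (a g x) = b h (φ x))


/-- Auxiliary: boxes are measurable. -/
lemma box_measurable {Γ W : Type} [MeasurableSpace W] (s : Finset Γ) (A : Γ → Set W)
    (hA : ∀ i, MeasurableSet (A i)) :
    MeasurableSet {x : Γ → W | ∀ i ∈ s, x i ∈ A i} := by
  have h : {x : Γ → W | ∀ i ∈ s, x i ∈ A i}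
      = ⋂ i ∈ (s : Set Γ), (fun x : Γ → W => x i) ⁻¹' A i := by
    ext x; simp
  rw [h]
  exact MeasurableSet.biInter s.countable_toSet fun i _ => (measurable_pi_apply i) (hA i)

/-- Auxiliary: two probability measures on a countable product agreeing on all finite
boxes are equal. -/
lemma measure_ext_boxes {Γ W : Type} [MeasurableSpace W]
    {m₁ m₂ : Measure (Γ → W)}
    (h1 : IsProbabilityMeasure m₁) (h2 : IsProbabilityMeasure m₂)
    (h : ∀ (s : Finset Γ) (A : Γ → Set W), (∀ i, MeasurableSet (A i)) →
      m₁ {x | ∀ i ∈ s, x i ∈ A i} = m₂ {x | ∀ i ∈ s, x i ∈ A i}) :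
    m₁ = m₂ := by
  classical
  set 𝒞 : Set (Set (Γ → W)) :=
    {S | ∃ (s : Finset Γ) (A : Γ → Set W), (∀ i, MeasurableSet (A i)) ∧
      S = {x | ∀ i ∈ s, x i ∈ A i}} with h𝒞
  have hgen : (MeasurableSpace.pi : MeasurableSpace (Γ → W))
      = MeasurableSpace.generateFrom 𝒞 := by
    refine le_antisymm ?_ (MeasurableSpace.generateFrom_le ?_)
    · refine iSup_le fun i => measurable_iff_comap_le.1 ?_
      intro A hA
      refine MeasurableSpace.measurableSet_generateFrom ?_
      refine ⟨{i}, fun _ => A, fun _ => hA, ?_⟩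
      ext x; simp
    · rintro S ⟨s, A, hA, rfl⟩
      exact box_measurable s A hA
  have hpi : IsPiSystem 𝒞 := by
    rintro S ⟨s, A, hA, rfl⟩ T ⟨t, A', hA', rfl⟩ -
    refine ⟨s ∪ t, fun i => (if i ∈ s then A i else Set.univ) ∩
        (if i ∈ t then A' i else Set.univ), fun i => ?_, ?_⟩
    · refine MeasurableSet.inter ?_ ?_ <;> split_ifs <;>
        first | exact hA _ | exact hA' _ | exact MeasurableSet.univ
    · ext x
      simp only [Set.mem_inter_iff, Set.mem_setOf_eq, Finset.mem_union]
      constructor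
      · rintro ⟨hx1, hx2⟩ i _
        constructor
        · split_ifs with hi
          · exact hx1 i hi
          · exact Set.mem_univ _
        · split_ifs with hi
          · exact hx2 i hi
          · exact Set.mem_univ _
      · intro hx
        constructor
        · intro i hi
          have := (hx i (Or.inl hi)).1
          simpa [hi] using this
        · intro i hi
          have := (hx i (Or.inr hi)).2
          simpa [hi] using this
  haveI := h1
  refine ext_of_generate_finite 𝒞 hgen hpi ?_ ?_
  · rintro S ⟨s, A, hA, rfl⟩
    exact h s A hA
  · rw [h1.measure_univ, h2.measure_univ]

/-- Auxiliary: an a.e. property of `ν` holds a.e. at every coordinate of a product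
measure. -/
lemma ae_forall_coord {Γ W : Type} [MeasurableSpace W] [Countable Γ]
    {ν : Measure W} {νΓ : Measure (Γ → W)} (hνΓ : IsProductMeasure ν νΓ)
    {p : W → Prop} (hp : ∀ᵐ y ∂ν, p y) :
    ∀ᵐ x ∂νΓ, ∀ γ : Γ, p (x γ) := by
  obtain ⟨N, hsub, hNm, hN0⟩ := exists_measurable_superset_of_null (ae_iff.1 hp)
  rw [ae_all_iff]
  intro γ
  have hbox : νΓ {x : Γ → W | ∀ i ∈ ({γ} : Finset Γ), x i ∈ N} = ν N := by
    rw [hνΓ.2 {γ} (fun _ => N) (fun _ => hNm), Finset.prod_singleton]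
  have hnull : νΓ {x : Γ → W | x γ ∈ N} = 0 := by
    have he : {x : Γ → W | x γ ∈ N} = {x | ∀ i ∈ ({γ} : Finset Γ), x i ∈ N} := by
      ext x; simp
    rw [he, hbox, hN0]
  refine ae_iff.2 (measure_mono_null ?_ hnull)
  intro x hx
  exact hsub hx

/-- If `φ` is an orbit equivalence between p.m.p. actions of `B` on `(Y,ν)`
and of `C` on `(Z,η)`, then the coordinatewise map `φ^Γ` is an orbit equivalence between
the associated wreath product actions of `B ≀ Γ` and `C ≀ Γ`; in particular those actions
are orbit equivalent. -/
theorem coordinatewise_orbitEquivalence_of_wreath_actions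
    (Γ B C Y Z : Type) [Group Γ] [Countable Γ] [Group B] [Countable B] [Group C] [Countable C]
    [MeasurableSpace Y] [MeasurableSpace Z] [StandardBorelSpace Y] [StandardBorelSpace Z]
    (ν : Measure Y) (η : Measure Z) [IsProbabilityMeasure ν] [IsProbabilityMeasure η]
    (b : B → Y → Y) (c : C → Z → Z) (hb : IsPmpAction b ν) (hc : IsPmpAction c η)
    (φ : Y → Z) (hφ : IsOrbitEquivalence b c ν η φ)
    (νΓ : Measure (Γ → Y)) (ηΓ : Measure (Γ → Z))
    (hνΓ : IsProductMeasure ν νΓ) (hηΓ : IsProductMeasure η ηΓ) :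
    IsOrbitEquivalence (wreathSmul b : wreath B Γ → (Γ → Y) → (Γ → Y))
      (wreathSmul c : wreath C Γ → (Γ → Z) → (Γ → Z)) νΓ ηΓ (fun y γ => φ (y γ)) ∧
    OrbitEquivalentActions (wreathSmul b : wreath B Γ → (Γ → Y) → (Γ → Y))
      (wreathSmul c : wreath C Γ → (Γ → Z) → (Γ → Z)) νΓ ηΓ := by
  classical
  obtain ⟨⟨hφmp, ψ, hψm, hψφ, hφψ⟩, hae⟩ := hφ
  haveI hνΓp := hνΓ.1
  haveI hηΓp := hηΓ.1
  set φΓ : (Γ → Y) → (Γ → Z) := fun y γ => φ (y γ) with hφΓdef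
  have hφΓm : Measurable φΓ :=
    measurable_pi_lambda _ fun γ => hφmp.measurable.comp (measurable_pi_apply γ)
  -- φΓ is measure preserving
  have hmap : νΓ.map φΓ = ηΓ := by
    haveI : IsProbabilityMeasure (νΓ.map φΓ) :=
      Measure.isProbabilityMeasure_map hφΓm.aemeasurable
    refine measure_ext_boxes this hηΓ.1 fun s A hA => ?_
    rw [Measure.map_apply hφΓm (box_measurable s A hA)]
    have hpre : φΓ ⁻¹' {x | ∀ i ∈ s, x i ∈ A i}
        = {y : Γ → Y | ∀ i ∈ s, y i ∈ φ ⁻¹' A i} := rfl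
    rw [hpre, hνΓ.2 s _ (fun i => hφmp.measurable (hA i)), hηΓ.2 s A hA]
    exact Finset.prod_congr rfl fun i _ =>
      hφmp.measure_preimage (hA i).nullMeasurableSet
  have hφΓmp : MeasurePreserving φΓ νΓ ηΓ := ⟨hφΓm, hmap⟩
  -- the coordinatewise inverse
  set ψΓ : (Γ → Z) → (Γ → Y) := fun z γ => ψ (z γ) with hψΓdef
  have hψΓm : Measurable ψΓ :=
    measurable_pi_lambda _ fun γ => hψm.comp (measurable_pi_apply γ)
  have h1 : ∀ᵐ x ∂νΓ, ψΓ (φΓ x) = x := by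
    filter_upwards [ae_forall_coord hνΓ hψφ] with x hx
    funext γ; exact hx γ
  have h2 : ∀ᵐ z ∂ηΓ, φΓ (ψΓ z) = z := by
    filter_upwards [ae_forall_coord hηΓ hφψ] with z hz
    funext γ; exact hz γ
  -- the orbit condition
  have horb : ∀ᵐ x ∂νΓ,
      (∀ g : wreath B Γ, ∃ h : wreath C Γ, φΓ (wreathSmul b g x) = wreathSmul c h (φΓ x)) ∧
      (∀ h : wreath C Γ, ∃ g : wreath B Γ, wreathSmul c h (φΓ x) = φΓ (wreathSmul b g x)) := by
    filter_upwards [ae_forall_coord hνΓ hae] with x hx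
    constructor
    · intro g
      set f : Γ → B := (g.left : Γ → B) with hfdef
      set k : Γ → C := fun v =>
        if hfv : f v = 1 then 1
        else Classical.choose ((hx (g.right⁻¹ • v)).1 (f v)) with hkdef
      have hksupp : (Function.mulSupport k).Finite := by
        refine Set.Finite.subset g.left.2 ?_
        intro v hv
        by_contra hfv
        simp only [Function.mem_mulSupport, not_not] at hfv
        exact hv (dif_pos hfv)
      refine ⟨⟨⟨k, hksupp⟩, g.right⟩, ?_⟩
      funext v
      show φ (b (f v) (x (g.right⁻¹ • v))) = c (k v) (φ (x (g.right⁻¹ • v)))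
      by_cases hfv : f v = 1
      · rw [hkdef]
        simp only [hfv, dif_pos]
        rw [hb.2.1, hc.2.1]
      · have hspec := Classical.choose_spec ((hx (g.right⁻¹ • v)).1 (f v))
        rw [hkdef]
        simp only [hfv, dif_neg, not_false_iff]
        exact hspec
    · intro h
      set k : Γ → C := (h.left : Γ → C) with hkdef
      set f : Γ → B := fun v =>
        if hkv : k v = 1 then 1
        else Classical.choose ((hx (h.right⁻¹ • v)).2 (k v)) with hfdef
      have hfsupp : (Function.mulSupport f).Finite := by
        refine Set.Finite.subset h.left.2 ?_
        intro v hv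
        by_contra hkv
        simp only [Function.mem_mulSupport, not_not] at hkv
        exact hv (dif_pos hkv)
      refine ⟨⟨⟨f, hfsupp⟩, h.right⟩, ?_⟩
      funext v
      show c (k v) (φ (x (h.right⁻¹ • v))) = φ (b (f v) (x (h.right⁻¹ • v)))
      by_cases hkv : k v = 1
      · rw [hfdef]
        simp only [hkv, dif_pos]
        rw [hb.2.1, hc.2.1]
      · have hspec := Classical.choose_spec ((hx (h.right⁻¹ • v)).2 (k v))
        rw [hfdef]
        simp only [hkv, dif_neg, not_false_iff]
        exact hspec
  have hOE : IsOrbitEquivalence (wreathSmul b : wreath B Γ → (Γ → Y) → (Γ → Y))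
      (wreathSmul c : wreath C Γ → (Γ → Z) → (Γ → Z)) νΓ ηΓ φΓ :=
    ⟨⟨hφΓmp, ψΓ, hψΓm, h1, h2⟩, horb⟩
  exact ⟨hOE, φΓ, hOE⟩

end OEW
end

section
/- Let Γ be a group that is the internal free product Γ = Λ ∗ H of subgroups Λ and H. Then there exists a set S ⊆ Γ of left coset representatives for Λ in Γ (i.e., S contains exactly one element of each coset γΛ) such that hS = S for every h ∈ H, λS △ S = {λ, e} for every λ ∈ Λ∖{e}, and consequently γS △ S is finite for every γ ∈ Γ. -/
/-!  Common definitions: wreath products, measured group actions, orbit equivalence,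
measure equivalence, measurable splittings, cocycle superrigidity, and cofinitely
equivariant maps.  -/

open MeasureTheory Function Filter Set
open scoped ENNReal

namespace OEW


variable {V B Γ : Type}

variable {V B C Γ X Y Z : Type}

variable {X : Type}

variable {X Y Z : Type}

namespace FPWords

variable {Γ : Type} [Group Γ] (Λ H : Subgroup Γ)

/-- A valid letter: nonidentity, in `Λ` if tagged `true`, in `H` if tagged `false`. -/
def Ok (p : Γ × Bool) : Prop :=
  p.1 ≠ 1 ∧ (p.2 = true → p.1 ∈ Λ) ∧ (p.2 = false → p.1 ∈ H)

/-- A reduced word: valid letters with alternating tags. -/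
def Red (l : List (Γ × Bool)) : Prop :=
  (∀ p ∈ l, Ok Λ H p) ∧ l.Chain' (fun p q => p.2 ≠ q.2)

/-- The product of a word. -/
def P (l : List (Γ × Bool)) : Γ := (l.map Prod.fst).prod

@[simp] lemma P_nil : P ([] : List (Γ × Bool)) = 1 := rfl

@[simp] lemma P_cons (p : Γ × Bool) (l : List (Γ × Bool)) : P (p :: l) = p.1 * P l := by
  simp [P]

lemma P_append (l m : List (Γ × Bool)) : P (l ++ m) = P l * P m := by
  simp [P]

variable {Λ H}

/-- Freeness: a nonempty reduced word has nontrivial product. -/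
lemma P_ne_one (hsplit : IsInternalFreeProduct Λ H) {l : List (Γ × Bool)} (hl : Red Λ H l) (hne : l ≠ []) :
    P l ≠ 1 := by
  obtain ⟨n, hn⟩ := Nat.exists_eq_succ_of_ne_zero (fun h => hne (List.length_eq_zero_iff.mp h))
  set w : Fin (n + 1) → Γ := fun i => (l.get (Fin.cast hn.symm i)).1 with hw
  set c : Fin (n + 1) → Bool := fun i => (l.get (Fin.cast hn.symm i)).2 with hc
  have hofn : List.ofFn w = l.map Prod.fst := by
    apply List.ext_getElem
    · simp [hn]
    · intro i h1 h2
      rw [List.getElem_ofFn, List.getElem_map]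
      rfl
  have hmem : ∀ i : Fin (n + 1), l.get (Fin.cast hn.symm i) ∈ l := fun i => by
    have : (Fin.cast hn.symm i : Fin l.length) = ⟨i.1, by omega⟩ := rfl
    rw [this]; exact l.get_mem _
  have := hsplit.2 n w c
    (fun i => ((hl.1 _ (hmem i)).1))
    (fun i => by
      have h := hl.1 _ (hmem i)
      by_cases hb : c i = true
      · simpa [hb, hw] using h.2.1 hb
      · simp only [Bool.not_eq_true] at hb
        simpa [hb, hw] using h.2.2 hb)
    (fun i => by
      have hch := List.isChain_iff_getElem.mp hl.2 i.1 (by omega)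
      simpa [hc, List.get] using hch)
  rw [hofn] at this
  exact this

/-- The formal inverse of a word. -/
def invL (l : List (Γ × Bool)) : List (Γ × Bool) :=
  (l.map (fun p => (p.1⁻¹, p.2))).reverse

lemma Red.invL {l : List (Γ × Bool)} (hl : Red Λ H l) : Red Λ H (invL l) := by
  constructor
  · intro p hp
    simp only [FPWords.invL, List.mem_reverse, List.mem_map] at hp
    obtain ⟨q, hq, rfl⟩ := hp
    obtain ⟨h1, h2, h3⟩ := hl.1 q hq
    exact ⟨inv_ne_one.mpr h1, fun h => Λ.inv_mem (h2 h), fun h => H.inv_mem (h3 h)⟩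
  · simp only [FPWords.invL]
    simp only [List.Chain']
    rw [List.isChain_reverse]
    refine (List.isChain_map _).mpr ?_
    exact List.IsChain.imp (fun a b h => Ne.symm h) hl.2

lemma P_invL (l : List (Γ × Bool)) : P (invL l) = (P l)⁻¹ := by
  rw [show (P l)⁻¹ = ((l.map Prod.fst).map (fun x => x⁻¹)).reverse.prod from
    List.prod_inv_reverse _]
  simp only [invL, P, List.map_reverse, List.map_map]
  congr 1

lemma getLast?_invL (l : List (Γ × Bool)) :
    (invL l).head? = (l.getLast?).map (fun p => (p.1⁻¹, p.2)) := by
  simp [invL, List.head?_reverse, List.getLast?_map]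

/-- Prepending a valid letter to a reduced word. -/
lemma prepend {p : Γ × Bool} (hp : Ok Λ H p) {l : List (Γ × Bool)} (hl : Red Λ H l) :
    ∃ l', Red Λ H l' ∧ P l' = p.1 * P l := by
  rcases l with _ | ⟨x, xs⟩
  · exact ⟨[p], ⟨by simpa using hp, List.isChain_singleton p⟩, by simp⟩
  · have hx := hl.1 x (by simp)
    have hxs : Red Λ H xs := ⟨fun q hq => hl.1 q (by simp [hq]), (List.isChain_cons.mp hl.2).2⟩
    have hhead : ∀ q ∈ xs.head?, x.2 ≠ q.2 := (List.isChain_cons.mp hl.2).1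
    by_cases hb : p.2 = x.2
    · set z : Γ := p.1 * x.1 with hz
      by_cases hz1 : z = 1
      · refine ⟨xs, hxs, ?_⟩
        have : p.1 = x.1⁻¹ := by rw [eq_inv_iff_mul_eq_one]; exact hz1.symm ▸ rfl
        simp [P_cons, this, mul_assoc]
      · refine ⟨(z, p.2) :: xs, ⟨?_, ?_⟩, by simp [hz, mul_assoc]⟩
        · intro q hq
          rcases List.mem_cons.mp hq with rfl | hq
          · refine ⟨hz1, fun h => ?_, fun h => ?_⟩
            · exact Λ.mul_mem (hp.2.1 h) (hx.2.1 (hb ▸ h))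
            · exact H.mul_mem (hp.2.2 h) (hx.2.2 (hb ▸ h))
          · exact hl.1 q (by simp [hq])
        · exact List.isChain_cons.mpr ⟨fun q hq => hb ▸ hhead q hq, hxs.2⟩
    · refine ⟨p :: x :: xs, ⟨?_, List.isChain_cons.mpr ⟨by intro q hq; simp_all, hl.2⟩⟩, rfl⟩
      intro q hq
      rcases List.mem_cons.mp hq with rfl | hq
      exacts [hp, hl.1 q hq]

/-- Multiplying two reduced words. -/
lemma concatRed {m l : List (Γ × Bool)} (hm : Red Λ H m) (hl : Red Λ H l) :
    ∃ l', Red Λ H l' ∧ P l' = P m * P l := by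
  induction m with
  | nil => exact ⟨l, hl, by simp⟩
  | cons p ps ih =>
    have hps : Red Λ H ps := ⟨fun q hq => hm.1 q (by simp [hq]), (List.isChain_cons.mp hm.2).2⟩
    obtain ⟨l'', hl'', hP⟩ := ih hps
    obtain ⟨l', hl', hP'⟩ := prepend (hm.1 p (by simp)) hl''
    exact ⟨l', hl', by rw [hP', hP, P_cons, mul_assoc]⟩

/-- Every element of the group is the product of a reduced word. -/
lemma exists_red (hsplit : IsInternalFreeProduct Λ H) (γ : Γ) : ∃ l, Red Λ H l ∧ P l = γ := by
  have hγ : γ ∈ Subgroup.closure ((Λ : Set Γ) ∪ (H : Set Γ)) := by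
    rw [Subgroup.closure_union, Subgroup.closure_eq, Subgroup.closure_eq, hsplit.1]
    trivial
  induction hγ using Subgroup.closure_induction with
  | mem x hx =>
    by_cases hx1 : x = 1
    · exact ⟨[], ⟨by simp, List.isChain_nil⟩, by simp [hx1]⟩
    · rcases hx with hx | hx
      · refine ⟨[(x, true)], ⟨?_, List.isChain_singleton _⟩, by simp [P]⟩
        intro q hq
        rcases List.mem_singleton.mp hq with rfl
        exact ⟨hx1, fun _ => hx, by simp⟩
      · refine ⟨[(x, false)], ⟨?_, List.isChain_singleton _⟩, by simp [P]⟩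
        intro q hq
        rcases List.mem_singleton.mp hq with rfl
        exact ⟨hx1, by simp, fun _ => hx⟩
  | one => exact ⟨[], ⟨by simp, List.isChain_nil⟩, by simp⟩
  | mul x y hx hy ihx ihy =>
    obtain ⟨m, hm, rfl⟩ := ihx
    obtain ⟨l, hl, rfl⟩ := ihy
    exact concatRed hm hl
  | inv x hx ihx =>
    obtain ⟨l, hl, rfl⟩ := ihx
    exact ⟨invL l, hl.invL, P_invL l⟩

lemma invL_getLast? (l : List (Γ × Bool)) :
    (invL l).getLast? = (l.head?).map (fun p => (p.1⁻¹, p.2)) := by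
  simp [invL, List.getLast?_reverse, List.head?_map]

lemma Red.tail {x : Γ × Bool} {xs : List (Γ × Bool)} (h : Red Λ H (x :: xs)) : Red Λ H xs :=
  ⟨fun q hq => h.1 q (by simp [hq]), (List.isChain_cons.mp h.2).2⟩

lemma Red.append {m l : List (Γ × Bool)} (hm : Red Λ H m) (hl : Red Λ H l)
    (hj : ∀ a ∈ m.getLast?, ∀ b ∈ l.head?, a.2 ≠ b.2) : Red Λ H (m ++ l) := by
  refine ⟨fun q hq => ?_, List.isChain_append.mpr ⟨hm.2, hl.2, hj⟩⟩
  rcases List.mem_append.mp hq with hq | hq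
  exacts [hm.1 q hq, hl.1 q hq]

/-- Uniqueness of reduced words. -/
lemma red_unique (hsplit : IsInternalFreeProduct Λ H) :
    ∀ l l' : List (Γ × Bool), Red Λ H l → Red Λ H l' → P l = P l' → l = l' := by
  intro l
  induction l with
  | nil =>
    intro l' _ hl' hP
    by_contra hne
    exact P_ne_one hsplit hl' (fun h => hne h.symm) (by simpa using hP.symm)
  | cons x xs ih =>
    intro l' hl hl' hP
    rcases l' with _ | ⟨y, ys⟩
    · exact absurd (by simpa using hP) (P_ne_one hsplit hl (by simp))
    · have hx : Ok Λ H x := hl.1 x (by simp)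
      have hy : Ok Λ H y := hl'.1 y (by simp)
      have hxs := hl.tail
      have hys := hl'.tail
      by_cases hb : x.2 = y.2
      · by_cases hxy : x.1 = y.1
        · have hxey : x = y := Prod.ext hxy hb
          subst hxey
          have : P xs = P ys := by
            have := hP
            simp only [P_cons] at this
            exact mul_left_cancel this
          rw [ih ys hxs hys this]
        · exfalso
          set z : Γ × Bool := (x.1⁻¹ * y.1, x.2) with hzdef
          have hzok : Ok Λ H z := by
            refine ⟨fun h => hxy ?_, fun h => ?_, fun h => ?_⟩
            · simp only [hzdef] at h
              exact inv_mul_eq_one.mp h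
            · exact Λ.mul_mem (Λ.inv_mem (hx.2.1 h)) (hy.2.1 (hb ▸ h))
            · exact H.mul_mem (H.inv_mem (hx.2.2 h)) (hy.2.2 (hb ▸ h))
          have hred : Red Λ H (invL xs ++ (z :: ys)) := by
            refine Red.append hxs.invL ⟨?_, ?_⟩ ?_
            · intro q hq
              rcases List.mem_cons.mp hq with rfl | hq
              exacts [hzok, hys.1 q hq]
            · refine List.isChain_cons.mpr ⟨?_, hys.2⟩
              intro q hq
              have := (List.isChain_cons.mp hl'.2).1 q hq
              simpa [hzdef, hb] using this
            · intro a ha b hb'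
              rw [invL_getLast?] at ha
              simp only [List.head?_cons, Option.mem_some_iff] at hb'
              subst hb'
              rcases hxx : xs.head? with _ | q
              · simp [hxx] at ha
              · rw [hxx] at ha
                simp only [Option.map_some, Option.mem_some_iff] at ha
                subst ha
                have := (List.isChain_cons.mp hl.2).1 q (by simp [hxx])
                simpa [hzdef] using Ne.symm this
          apply P_ne_one hsplit hred (by simp)
          have hPP : x.1 * P xs = y.1 * P ys := by simpa [P_cons] using hP
          rw [P_append, P_invL, P_cons]
          simp only [hzdef]
          rw [show x.1⁻¹ * y.1 * P ys = x.1⁻¹ * (y.1 * P ys) by group, ← hPP]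
          group
      · exfalso
        have hred : Red Λ H (invL (x :: xs) ++ (y :: ys)) := by
          refine Red.append hl.invL hl' ?_
          intro a ha b hb'
          rw [invL_getLast?] at ha
          simp only [List.head?_cons, Option.map_some, Option.mem_some_iff] at ha hb'
          subst ha; subst hb'
          simpa using hb
        apply P_ne_one hsplit hred (by simp [invL])
        rw [P_append, P_invL, hP]
        group

/-- The word ends with an `H`-letter (or is empty). -/
def EndsH (l : List (Γ × Bool)) : Prop := ∀ p ∈ l.getLast?, p.2 = false

variable (Λ H) in
/-- The coset section: products of reduced words ending in `H` (or empty). -/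
def SS : Set Γ := {γ | ∃ l, Red Λ H l ∧ EndsH l ∧ P l = γ}

lemma one_mem_SS : (1 : Γ) ∈ SS Λ H := ⟨[], ⟨by simp, List.isChain_nil⟩, by simp [EndsH], rfl⟩

lemma lam_not_mem_SS (hsplit : IsInternalFreeProduct Λ H) {a : Γ} (ha : a ∈ Λ) (ha1 : a ≠ 1) : a ∉ SS Λ H := by
  rintro ⟨l, hl, hEnd, hP⟩
  have hsing : Red Λ H [(a, true)] := by
    refine ⟨?_, List.isChain_singleton _⟩
    intro q hq
    rcases List.mem_singleton.mp hq with rfl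
    exact ⟨ha1, fun _ => ha, by simp⟩
  have := red_unique hsplit l [(a, true)] hl hsing (by simpa [P] using hP)
  subst this
  simpa using hEnd (a, true) (by simp)

lemma h_mul_mem_SS {h γ : Γ} (hh : h ∈ H) (hγ : γ ∈ SS Λ H) : h * γ ∈ SS Λ H := by
  by_cases hh1 : h = 1
  · simpa [hh1] using hγ
  obtain ⟨l, hl, hEnd, rfl⟩ := hγ
  rcases l with _ | ⟨x, xs⟩
  · exact ⟨[(h, false)], ⟨by
      intro q hq; rcases List.mem_singleton.mp hq with rfl
      exact ⟨hh1, by simp, fun _ => hh⟩, List.isChain_singleton _⟩, by simp [EndsH], by simp⟩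
  have hx : Ok Λ H x := hl.1 x (by simp)
  have hxs := hl.tail
  have hhead := (List.isChain_cons.mp hl.2).1
  by_cases hb : x.2 = true
  · refine ⟨(h, false) :: x :: xs, ⟨?_, ?_⟩, ?_, by simp⟩
    · intro q hq
      rcases List.mem_cons.mp hq with rfl | hq
      exacts [⟨hh1, by simp, fun _ => hh⟩, hl.1 q hq]
    · exact List.isChain_cons.mpr ⟨by simp [hb], hl.2⟩
    · intro p hp
      rw [List.getLast?_cons_cons] at hp
      exact hEnd p hp
  · have hb' : x.2 = false := by simpa using hb
    by_cases hz : h * x.1 = 1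
    · refine ⟨xs, hxs, ?_, ?_⟩
      · intro p hp
        rcases xs with _ | ⟨w, ws⟩
        · simp at hp
        · rw [← List.getLast?_cons_cons (a := x)] at hp
          exact hEnd p hp
      · have : h = x.1⁻¹ := eq_inv_of_mul_eq_one_left hz
        simp [this, P_cons, mul_assoc]
    · refine ⟨(h * x.1, false) :: xs, ⟨?_, ?_⟩, ?_, by simp [mul_assoc]⟩
      · intro q hq
        rcases List.mem_cons.mp hq with rfl | hq
        exacts [⟨hz, by simp, fun _ => H.mul_mem hh (hx.2.2 hb')⟩, hxs.1 q hq]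
      · exact List.isChain_cons.mpr ⟨fun q hq => by
          have := hhead q hq; rw [hb'] at this; simpa using this, hxs.2⟩
      · intro p hp
        rcases xs with _ | ⟨w, ws⟩
        · simp only [List.getLast?_singleton, Option.mem_some_iff] at hp
          subst hp; rfl
        · rw [List.getLast?_cons_cons] at hp
          rw [← List.getLast?_cons_cons (a := x)] at hp
          exact hEnd p hp

lemma lam_mul_mem_SS {a γ : Γ} (ha : a ∈ Λ) (hγ : γ ∈ SS Λ H) (hγ1 : γ ≠ 1) :
    a * γ ∈ SS Λ H := by
  by_cases ha1 : a = 1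
  · simpa [ha1] using hγ
  obtain ⟨l, hl, hEnd, rfl⟩ := hγ
  rcases l with _ | ⟨x, xs⟩
  · simp [P] at hγ1
  have hx : Ok Λ H x := hl.1 x (by simp)
  have hxs := hl.tail
  have hhead := (List.isChain_cons.mp hl.2).1
  by_cases hb : x.2 = true
  · by_cases hz : a * x.1 = 1
    · refine ⟨xs, hxs, ?_, ?_⟩
      · intro p hp
        rcases xs with _ | ⟨w, ws⟩
        · simp at hp
        · rw [← List.getLast?_cons_cons (a := x)] at hp
          exact hEnd p hp
      · have : a = x.1⁻¹ := eq_inv_of_mul_eq_one_left hz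
        simp [this, P_cons, mul_assoc]
    · refine ⟨(a * x.1, true) :: xs, ⟨?_, ?_⟩, ?_, by simp [mul_assoc]⟩
      · intro q hq
        rcases List.mem_cons.mp hq with rfl | hq
        exacts [⟨hz, fun _ => Λ.mul_mem ha (hx.2.1 hb), by simp⟩, hxs.1 q hq]
      · exact List.isChain_cons.mpr ⟨fun q hq => by
          have := hhead q hq; rw [hb] at this; simpa using this, hxs.2⟩
      · intro p hp
        rcases xs with _ | ⟨w, ws⟩
        · exfalso
          have := hEnd x (by simp)
          rw [hb] at this; simp at this
        · rw [List.getLast?_cons_cons] at hp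
          rw [← List.getLast?_cons_cons (a := x)] at hp
          exact hEnd p hp
  · refine ⟨(a, true) :: x :: xs, ⟨?_, ?_⟩, ?_, by simp⟩
    · intro q hq
      rcases List.mem_cons.mp hq with rfl | hq
      exacts [⟨ha1, fun _ => ha, by simp⟩, hl.1 q hq]
    · refine List.isChain_cons.mpr ⟨?_, hl.2⟩
      intro q hq
      simp only [List.head?_cons, Option.mem_some_iff] at hq
      subst hq
      exact fun h => hb h.symm
    · intro p hp
      rw [List.getLast?_cons_cons] at hp
      exact hEnd p hp

/-- Existence of a representative in each left `Λ`-coset. -/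
lemma exists_rep (hsplit : IsInternalFreeProduct Λ H) (γ : Γ) :
    ∃ s : Γ, s ∈ SS Λ H ∧ γ⁻¹ * s ∈ Λ := by
  obtain ⟨l, hl, rfl⟩ := exists_red hsplit γ
  by_cases hnil : l = []
  · exact ⟨P l, ⟨l, hl, by simp [hnil, EndsH], rfl⟩, by simpa using Λ.one_mem⟩
  set a := l.getLast hnil with hadef
  have hmem : a ∈ l := List.getLast_mem hnil
  have hsplit_l : l.dropLast ++ [a] = l := List.dropLast_append_getLast hnil
  by_cases hb : a.2 = true
  · refine ⟨P l.dropLast, ⟨l.dropLast, ?_, ?_, rfl⟩, ?_⟩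
    · exact ⟨fun q hq => hl.1 q (List.dropLast_subset l hq), List.IsChain.prefix hl.2 (List.dropLast_prefix l)⟩
    · intro p hp
      have hch := hl.2
      rw [← hsplit_l] at hch
      have := (List.isChain_append.mp hch).2.2 p hp a (by simp)
      rw [hb] at this
      simpa using this
    · have : P l = P l.dropLast * a.1 := by
        conv_lhs => rw [← hsplit_l]
        simp [P_append, P]
      rw [this]
      have := (hl.1 a hmem).2.1 hb
      group
      simpa using Λ.inv_mem this
  · exact ⟨P l, ⟨l, hl, fun p hp => by
      rw [List.getLast?_eq_getLast hnil, Option.mem_some_iff] at hp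
      subst hp
      simpa using hb, rfl⟩, by simpa using Λ.one_mem⟩

/-- Uniqueness of the representative. -/
lemma rep_unique (hsplit : IsInternalFreeProduct Λ H) {s s' : Γ} (hs : s ∈ SS Λ H) (hs' : s' ∈ SS Λ H)
    (hss : s⁻¹ * s' ∈ Λ) : s = s' := by
  by_cases h1 : s⁻¹ * s' = 1
  · exact (eq_of_inv_mul_eq_one h1)
  exfalso
  obtain ⟨l, hl, hEnd, rfl⟩ := hs
  obtain ⟨l', hl', hEnd', rfl⟩ := hs'
  have hm : Red Λ H (l ++ [((P l)⁻¹ * P l', true)]) := by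
    refine Red.append hl ⟨?_, List.isChain_singleton _⟩ ?_
    · intro q hq
      rcases List.mem_singleton.mp hq with rfl
      exact ⟨h1, fun _ => hss, by simp⟩
    · intro p hp q hq
      rcases Option.mem_some_iff.mp hq with rfl
      rw [hEnd p hp]
      simp
  have heq := red_unique hsplit _ l' hm hl' (by simp [P_append, P])
  have hgl := congrArg List.getLast? heq
  rw [List.getLast?_concat] at hgl
  have := hEnd' _ (Option.mem_def.mpr hgl.symm)
  simp at this

theorem main (hsplit : IsInternalFreeProduct Λ H) :
    ∃ S : Set Γ,
      (∀ γ : Γ, ∃! s : Γ, s ∈ S ∧ γ⁻¹ * s ∈ Λ) ∧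
      (∀ h : Γ, h ∈ H → (h * ·) '' S = S) ∧
      (∀ l : Γ, l ∈ Λ → l ≠ 1 → symmDiff ((l * ·) '' S) S = {l, 1}) ∧
      ∀ γ : Γ, (symmDiff ((γ * ·) '' S) S).Finite := by
  classical
  have key2 : ∀ h : Γ, h ∈ H → (h * ·) '' SS Λ H = SS Λ H := by
    intro h hh
    ext γ
    constructor
    · rintro ⟨s, hs, rfl⟩
      exact h_mul_mem_SS hh hs
    · intro hγ
      exact ⟨h⁻¹ * γ, h_mul_mem_SS (H.inv_mem hh) hγ, by simp⟩
  have key3 : ∀ a : Γ, a ∈ Λ → a ≠ 1 →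
      symmDiff ((a * ·) '' SS Λ H) (SS Λ H) = {a, 1} := by
    intro a ha ha1
    rw [Set.symmDiff_def]
    ext u
    simp only [Set.mem_union, Set.mem_diff, Set.mem_insert_iff, Set.mem_singleton_iff]
    constructor
    · rintro (⟨⟨s, hs, rfl⟩, hns⟩ | ⟨hu, hnu⟩)
      · left
        have hs1 : s = 1 := by
          by_contra hs1
          exact hns (lam_mul_mem_SS ha hs hs1)
        simp [hs1]
      · right
        by_contra hu1
        exact hnu ⟨a⁻¹ * u, lam_mul_mem_SS (Λ.inv_mem ha) hu hu1, by simp⟩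
    · rintro (rfl | rfl)
      · exact Or.inl ⟨⟨1, one_mem_SS, mul_one _⟩, lam_not_mem_SS hsplit ha ha1⟩
      · refine Or.inr ⟨one_mem_SS, ?_⟩
        rintro ⟨s, hs, hs1⟩
        have : s = a⁻¹ := eq_inv_of_mul_eq_one_right hs1
        rw [this] at hs
        exact lam_not_mem_SS hsplit (Λ.inv_mem ha) (inv_ne_one.mpr ha1) hs
    -- note: we may need to adjust `mul_comm` usage above
  refine ⟨SS Λ H, ?_, key2, key3, ?_⟩
  · intro γ
    obtain ⟨s, hs, hγs⟩ := exists_rep hsplit γ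
    refine ⟨s, ⟨hs, hγs⟩, ?_⟩
    rintro s' ⟨hs', hγs'⟩
    have hmem : s'⁻¹ * s ∈ Λ := by
      have h2 := Λ.mul_mem (Λ.inv_mem hγs') hγs
      have : (γ⁻¹ * s')⁻¹ * (γ⁻¹ * s) = s'⁻¹ * s := by group
      rwa [this] at h2
    exact rep_unique hsplit hs' hs hmem
  · intro γ
    have hγ : γ ∈ Subgroup.closure ((Λ : Set Γ) ∪ (H : Set Γ)) := by
      rw [Subgroup.closure_union, Subgroup.closure_eq, Subgroup.closure_eq, hsplit.1]
      trivial
    induction hγ using Subgroup.closure_induction with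
    | mem x hx =>
      rcases hx with hx | hx
      · by_cases hx1 : x = 1
        · subst hx1
          have himg : ((1 : Γ) * ·) '' SS Λ H = SS Λ H := by simp
          rw [himg, symmDiff_self]
          exact Set.finite_empty
        · rw [key3 x hx hx1]
          exact (Set.finite_singleton 1).insert x
      · rw [key2 x hx, symmDiff_self]
        exact Set.finite_empty
    | one =>
      have himg : ((1 : Γ) * ·) '' SS Λ H = SS Λ H := by simp
      rw [himg, symmDiff_self]
      exact Set.finite_empty
    | mul x y hx hy ihx ihy =>
      have himg : (x * y * ·) '' SS Λ H = (x * ·) '' ((y * ·) '' SS Λ H) := by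
        rw [Set.image_image]
        simp only [mul_assoc]
      refine Set.Finite.subset (Set.Finite.union ?_ ihx)
        (symmDiff_triangle _ ((x * ·) '' SS Λ H) _)
      rw [himg, ← Set.image_symmDiff (mul_right_injective x)]
      exact ihy.image _
    | inv x hx ihx =>
      have : symmDiff ((x⁻¹ * ·) '' SS Λ H) (SS Λ H) =
          (x⁻¹ * ·) '' (symmDiff (SS Λ H) ((x * ·) '' SS Λ H)) := by
        rw [Set.image_symmDiff (mul_right_injective x⁻¹), Set.image_image]
        simp
      rw [this]
      exact ((symmDiff_comm ((x * ·) '' SS Λ H) (SS Λ H)) ▸ ihx).image _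

end FPWords

/-- If `Γ = Λ ∗ H` is an internal free product, then there is a set `S`
of left coset representatives for `Λ` in `Γ` with `hS = S` for `h ∈ H`,
`λS △ S = {λ, e}` for `λ ∈ Λ \ {e}`, and consequently `γS △ S` finite for every `γ`. -/
theorem exists_almost_invariant_coset_reps_of_free_factor
    (Γ : Type) [Group Γ] (Λ H : Subgroup Γ) (hsplit : IsInternalFreeProduct Λ H) :
    ∃ S : Set Γ,
      (∀ γ : Γ, ∃! s : Γ, s ∈ S ∧ γ⁻¹ * s ∈ Λ) ∧
      (∀ h : Γ, h ∈ H → (h * ·) '' S = S) ∧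
      (∀ l : Γ, l ∈ Λ → l ≠ 1 → symmDiff ((l * ·) '' S) S = {l, 1}) ∧
      ∀ γ : Γ, (symmDiff ((γ * ·) '' S) S).Finite :=
  FPWords.main hsplit

end OEW
end

section
/- Let Γ be a countable group and (X,μ) a standard probability space whose measure is not a single point mass. Assume the Bernoulli shift Γ ↷ (X^Γ, μ^Γ) is L-cocycle superrigid for some nontrivial Polish group L admitting a compatible bi-invariant metric. Then Γ has at most one end; that is, every subset S ⊆ Γ such that γS △ S is finite for every γ ∈ Γ is either finite or has finite complement in Γ. -/
/-!  Common definitions: wreath products, measured group actions, orbit equivalence,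
measure equivalence, measurable splittings, cocycle superrigidity, and cofinitely
equivariant maps.  -/

open MeasureTheory Function Filter Set
open scoped ENNReal

namespace OEW


variable {V B Γ : Type}

variable {V B C Γ X Y Z : Type}

variable {X : Type}

variable {X Y Z : Type}

/-! ### Auxiliary machinery for Statement 18 -/

section Statement18Aux

open MeasurableSpace

variable {ι : Type} {X : Type} [MeasurableSpace X]

/-- Finite-dimensional measurable rectangle (cylinder) in a product space. -/
def cylSet (s : Finset ι) (B : ι → Set X) : Set (ι → X) := {x | ∀ i ∈ s, x i ∈ B i}

/-- The family of cylinders all of whose base coordinates satisfy `P`. -/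
def cylFam (P : ι → Prop) : Set (Set (ι → X)) :=
  {T | ∃ (s : Finset ι) (B : ι → Set X),
    (∀ i, MeasurableSet (B i)) ∧ (∀ i ∈ s, P i) ∧ T = cylSet s B}

lemma measurableSet_cylSet {s : Finset ι} {B : ι → Set X} (hB : ∀ i, MeasurableSet (B i)) :
    MeasurableSet (cylSet s B) := by
  have h : cylSet s B = ⋂ i ∈ s, (fun x : ι → X => x i) ⁻¹' B i := by
    ext x; simp [cylSet]
  rw [h]
  exact MeasurableSet.biInter s.countable_toSet fun i _ => measurable_pi_apply i (hB i)

lemma isPiSystem_cylFam (P : ι → Prop) : IsPiSystem (cylFam (X := X) P) := by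
  classical
  rintro T₁ ⟨s₁, B₁, hB₁, hP₁, rfl⟩ T₂ ⟨s₂, B₂, hB₂, hP₂, rfl⟩ -
  refine ⟨s₁ ∪ s₂,
    fun i => (if i ∈ s₁ then B₁ i else Set.univ) ∩ (if i ∈ s₂ then B₂ i else Set.univ),
    ?_, ?_, ?_⟩
  · intro i
    refine MeasurableSet.inter ?_ ?_ <;> [skip; skip] <;>
      first
        | exact (by split <;> simp [hB₁ i, hB₂ i])
  · intro i hi
    rcases Finset.mem_union.mp hi with h | h
    exacts [hP₁ i h, hP₂ i h]
  · ext x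
    simp only [cylSet, Set.mem_inter_iff, Set.mem_setOf_eq, Finset.mem_union]
    constructor
    · rintro ⟨h₁, h₂⟩ i _
      constructor
      · by_cases hm : i ∈ s₁ <;> simp [hm, h₁ i]
      · by_cases hm : i ∈ s₂ <;> simp [hm, h₂ i]
    · intro h
      constructor
      · intro i hi
        have := (h i (Or.inl hi)).1
        simpa [hi] using this
      · intro i hi
        have := (h i (Or.inr hi)).2
        simpa [hi] using this

lemma measurable_eval_cylFam (P : ι → Prop) {δ : ι} (hδ : P δ) :
    Measurable[generateFrom (cylFam (X := X) P)] (fun x : ι → X => x δ) := by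
  intro A hA
  have h : (fun x : ι → X => x δ) ⁻¹' A = cylSet {δ} (fun _ => A) := by
    ext x; simp [cylSet]
  rw [h]
  exact measurableSet_generateFrom ⟨{δ}, fun _ => A, fun _ => hA, by simpa using hδ, rfl⟩

lemma measurable_proj_cylFam {P : ι → Prop} (F : Finset ι) (g : ι → ι)
    (hg : ∀ i : F, P (g ↑i)) :
    Measurable[generateFrom (cylFam (X := X) P)] (fun (x : ι → X) (i : F) => x (g ↑i)) :=
  @measurable_pi_lambda (ι → X) F (fun _ => X)
    (generateFrom (cylFam (X := X) P)) _ _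
    (fun i => measurable_eval_cylFam P (hg i))

lemma pi_eq_generateFrom_cylFam_top :
    (MeasurableSpace.pi : MeasurableSpace (ι → X)) =
      generateFrom (cylFam (X := X) fun _ : ι => True) := by
  refine le_antisymm ?_ (generateFrom_le fun T hT => ?_)
  · have hid : @Measurable (ι → X) (ι → X)
        (generateFrom (cylFam (X := X) fun _ : ι => True)) MeasurableSpace.pi id :=
      @measurable_pi_lambda (ι → X) ι (fun _ => X)
        (generateFrom (cylFam (X := X) fun _ : ι => True)) _ id
        (fun δ => measurable_eval_cylFam _ trivial)
    exact fun T hT => hid hT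
  · obtain ⟨s, B, hB, -, rfl⟩ := hT
    exact measurableSet_cylSet hB

lemma IsProductMeasure.cylSet_eq {μ : Measure X} {mP : Measure (ι → X)}
    (h : IsProductMeasure μ mP) (s : Finset ι) {B : ι → Set X}
    (hB : ∀ i, MeasurableSet (B i)) : mP (cylSet s B) = ∏ i ∈ s, μ (B i) :=
  h.2 s B hB

lemma shiftS_measurePreserving {Γ : Type} [Group Γ] {μ : Measure X} {mP : Measure (Γ → X)}
    (h : IsProductMeasure μ mP) (γ : Γ) :
    MeasurePreserving (shiftS γ : (Γ → X) → (Γ → X)) mP mP := by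
  classical
  haveI : IsProbabilityMeasure mP := h.1
  have hmeas : Measurable (shiftS γ : (Γ → X) → (Γ → X)) :=
    measurable_pi_lambda _ fun v => measurable_pi_apply _
  refine ⟨hmeas, ?_⟩
  haveI : IsProbabilityMeasure (Measure.map (shiftS γ : (Γ → X) → (Γ → X)) mP) :=
    Measure.isProbabilityMeasure_map hmeas.aemeasurable
  refine ext_of_generate_finite _ pi_eq_generateFrom_cylFam_top (isPiSystem_cylFam _) ?_
    (by simp)
  rintro T ⟨s, B, hB, -, rfl⟩
  rw [Measure.map_apply hmeas (measurableSet_cylSet hB)]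
  have hpre : (shiftS γ : (Γ → X) → (Γ → X)) ⁻¹' cylSet s B
      = cylSet (s.image fun i => γ⁻¹ * i) (fun j => B (γ * j)) := by
    ext x
    simp only [cylSet, Set.mem_preimage, Set.mem_setOf_eq, Finset.mem_image, shiftS,
      smul_eq_mul]
    constructor
    · rintro hx j ⟨i, hi, rfl⟩
      simpa [mul_inv_cancel_left] using hx i hi
    · intro hx i hi
      have := hx (γ⁻¹ * i) ⟨i, hi, rfl⟩
      simpa [mul_inv_cancel_left] using this
  rw [hpre, h.cylSet_eq _ fun j => hB _, h.cylSet_eq _ hB,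
    Finset.prod_image (fun a _ b _ hab => mul_left_cancel hab)]
  exact Finset.prod_congr rfl fun i _ => by rw [mul_inv_cancel_left]

lemma indep_coordinate {μ : Measure X} {mP : Measure (ι → X)}
    (h : IsProductMeasure μ mP) (δ₀ : ι) {Bs : Set X} (hBs : MeasurableSet Bs)
    {W : Set (ι → X)}
    (hW : MeasurableSet[generateFrom (cylFam (X := X) fun i : ι => i ≠ δ₀)] W) :
    mP ({x | x δ₀ ∈ Bs} ∩ W) = μ Bs * mP W := by
  classical
  haveI : IsProbabilityMeasure mP := h.1
  have hle : generateFrom (cylFam (X := X) fun i : ι => i ≠ δ₀) ≤ MeasurableSpace.pi :=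
    generateFrom_le fun T hT => by
      obtain ⟨s, B, hB, -, rfl⟩ := hT
      exact measurableSet_cylSet hB
  have hsingle : mP {x | x δ₀ ∈ Bs} = μ Bs := by
    have hh : {x : ι → X | x δ₀ ∈ Bs} = cylSet {δ₀} (fun _ => Bs) := by
      ext x; simp [cylSet]
    rw [hh, h.cylSet_eq _ fun _ => hBs]; simp
  haveI : IsFiniteMeasure ((mP.restrict {x | x δ₀ ∈ Bs}).trim hle) := by
    constructor
    rw [trim_measurableSet_eq hle MeasurableSet.univ, Measure.restrict_apply_univ]
    exact measure_lt_top mP _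
  have hext : (mP.restrict {x | x δ₀ ∈ Bs}).trim hle = (μ Bs • mP).trim hle := by
    refine ext_of_generate_finite _ rfl (isPiSystem_cylFam _) ?_ ?_
    · rintro T hTmem
      obtain ⟨s, B, hB, hP, rfl⟩ := hTmem
      have hT₀ : MeasurableSet[generateFrom (cylFam (X := X) fun i : ι => i ≠ δ₀)]
          (cylSet s B) := measurableSet_generateFrom ⟨s, B, hB, hP, rfl⟩
      rw [trim_measurableSet_eq hle hT₀, trim_measurableSet_eq hle hT₀,
        Measure.restrict_apply (hle _ hT₀)]
      have hδ₀s : δ₀ ∉ s := fun hc => hP δ₀ hc rfl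
      have hintr : cylSet s B ∩ {x : ι → X | x δ₀ ∈ Bs}
          = cylSet (insert δ₀ s) (Function.update B δ₀ Bs) := by
        ext x
        simp only [cylSet, Set.mem_inter_iff, Set.mem_setOf_eq, Finset.mem_insert]
        constructor
        · rintro ⟨h₁, h₂⟩ i hi
          rcases hi with rfl | hi
          · simpa [Function.update_self] using h₂
          · have hne : i ≠ δ₀ := fun hc => hδ₀s (hc ▸ hi)
            rw [Function.update_of_ne hne]; exact h₁ i hi
        · intro hx
          refine ⟨fun i hi => ?_, ?_⟩
          · have hne : i ≠ δ₀ := fun hc => hδ₀s (by rw [← hc]; exact hi)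
            have := hx i (Or.inr hi)
            rwa [Function.update_of_ne hne] at this
          · simpa [Function.update_self] using hx δ₀ (Or.inl rfl)
      have hBup : ∀ i, MeasurableSet (Function.update B δ₀ Bs i) := by
        intro i
        by_cases hi : i = δ₀
        · subst hi; simpa [Function.update_self] using hBs
        · rw [Function.update_of_ne hi]; exact hB i
      rw [hintr, h.cylSet_eq _ hBup, Finset.prod_insert hδ₀s, Function.update_self,
        Measure.smul_apply, smul_eq_mul, h.cylSet_eq _ hB]
      congr 1
      exact Finset.prod_congr rfl fun i hi => by
        rw [Function.update_of_ne (show i ≠ δ₀ from fun hc => hδ₀s (by rw [← hc]; exact hi))]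
    · rw [trim_measurableSet_eq hle MeasurableSet.univ,
        trim_measurableSet_eq hle MeasurableSet.univ, Measure.restrict_apply_univ,
        hsingle, Measure.smul_apply, smul_eq_mul]
      simp
  have hWpi : MeasurableSet W := hle _ hW
  calc mP ({x | x δ₀ ∈ Bs} ∩ W) = (mP.restrict {x | x δ₀ ∈ Bs}) W := by
        rw [Measure.restrict_apply hWpi, Set.inter_comm]
    _ = ((mP.restrict {x | x δ₀ ∈ Bs}).trim hle) W := (trim_measurableSet_eq hle hW).symm
    _ = ((μ Bs • mP).trim hle) W := by rw [hext]
    _ = μ Bs * mP W := by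
        rw [trim_measurableSet_eq hle hW, Measure.smul_apply, smul_eq_mul]

/-! #### The algebra of finitely-determined sets and approximation -/

/-- Restriction of a configuration to a finite window. -/
def projF (s : Finset ι) (x : ι → X) : s → X := fun i => x i

lemma measurable_projF (s : Finset ι) : Measurable (projF (X := X) s) :=
  measurable_pi_lambda _ fun i => measurable_pi_apply _

/-- Sets determined by finitely many coordinates. -/
def cylAlg : Set (Set (ι → X)) :=
  {T | ∃ (s : Finset ι) (V : Set (s → X)), MeasurableSet V ∧ T = projF s ⁻¹' V}

lemma cylAlg_empty : (∅ : Set (ι → X)) ∈ cylAlg (ι := ι) (X := X) :=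
  ⟨∅, ∅, MeasurableSet.empty, by simp⟩

lemma cylAlg_compl {T : Set (ι → X)} (hT : T ∈ cylAlg (ι := ι) (X := X)) :
    Tᶜ ∈ cylAlg (ι := ι) (X := X) := by
  obtain ⟨s, V, hV, rfl⟩ := hT
  exact ⟨s, Vᶜ, hV.compl, by rw [Set.preimage_compl]⟩

lemma cylAlg_union {T₁ T₂ : Set (ι → X)} (h₁ : T₁ ∈ cylAlg (ι := ι) (X := X))
    (h₂ : T₂ ∈ cylAlg (ι := ι) (X := X)) : T₁ ∪ T₂ ∈ cylAlg (ι := ι) (X := X) := by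
  classical
  obtain ⟨s₁, V₁, hV₁, rfl⟩ := h₁
  obtain ⟨s₂, V₂, hV₂, rfl⟩ := h₂
  refine ⟨s₁ ∪ s₂,
    ((fun (y : (s₁ ∪ s₂ : Finset ι) → X) (i : s₁) => y ⟨i.1, Finset.mem_union_left _ i.2⟩)
        ⁻¹' V₁) ∪
    ((fun (y : (s₁ ∪ s₂ : Finset ι) → X) (i : s₂) => y ⟨i.1, Finset.mem_union_right _ i.2⟩)
        ⁻¹' V₂), ?_, ?_⟩
  · refine MeasurableSet.union ?_ ?_ <;>
      exact (measurable_pi_lambda _ fun i => measurable_pi_apply _) (by assumption)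
  · rw [Set.preimage_union]
    rfl

lemma cylAlg_measurableSet {T : Set (ι → X)} (hT : T ∈ cylAlg (ι := ι) (X := X)) :
    MeasurableSet T := by
  obtain ⟨s, V, hV, rfl⟩ := hT
  exact measurable_projF s hV

lemma pi_eq_generateFrom_cylAlg :
    (MeasurableSpace.pi : MeasurableSpace (ι → X)) =
      generateFrom (cylAlg (ι := ι) (X := X)) := by
  refine le_antisymm ?_ (generateFrom_le fun T hT => cylAlg_measurableSet hT)
  have hev : ∀ δ : ι, Measurable[generateFrom (cylAlg (ι := ι) (X := X))]
      (fun x : ι → X => x δ) := by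
    intro δ A hA
    refine measurableSet_generateFrom
      ⟨{δ}, (fun y : ({δ} : Finset ι) → X => y ⟨δ, Finset.mem_singleton_self δ⟩) ⁻¹' A,
        measurable_pi_apply _ hA, rfl⟩
  have hid : @Measurable (ι → X) (ι → X)
      (generateFrom (cylAlg (ι := ι) (X := X))) MeasurableSpace.pi id :=
    @measurable_pi_lambda (ι → X) ι (fun _ => X)
      (generateFrom (cylAlg (ι := ι) (X := X))) _ id hev
  exact fun T hT => hid hT

lemma cylAlg_biUnion {n : ℕ} {U : ℕ → Set (ι → X)}
    (hU : ∀ k, k < n → U k ∈ cylAlg (ι := ι) (X := X)) :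
    (⋃ k ∈ Finset.range n, U k) ∈ cylAlg (ι := ι) (X := X) := by
  classical
  induction n with
  | zero => simpa using cylAlg_empty
  | succ n ih =>
      rw [Finset.range_add_one, Finset.set_biUnion_insert]
      exact cylAlg_union (hU n (Nat.lt_succ_self n))
        (ih fun k hk => hU k (Nat.lt_succ_of_lt hk))

lemma approx_by_cylAlg (mP : Measure (ι → X)) [IsFiniteMeasure mP] {T : Set (ι → X)}
    (hT : MeasurableSet T) :
    ∀ ε : ℝ≥0∞, ε ≠ 0 → ε ≠ ⊤ → ∃ U ∈ cylAlg (ι := ι) (X := X), mP (symmDiff T U) < ε := by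
  have hT' : MeasurableSet[generateFrom (cylAlg (ι := ι) (X := X))] T := by
    rw [← pi_eq_generateFrom_cylAlg]; exact hT
  refine MeasurableSpace.generateFrom_induction
    (p := fun t _ => ∀ ε : ℝ≥0∞, ε ≠ 0 → ε ≠ ⊤ →
      ∃ U ∈ cylAlg (ι := ι) (X := X), mP (symmDiff t U) < ε)
    (C := cylAlg (ι := ι) (X := X)) ?_ ?_ ?_ ?_ T hT'
  · intro t ht _ ε hε0 _
    exact ⟨t, ht, by simp [symmDiff_self, Set.bot_eq_empty, pos_iff_ne_zero.mpr hε0]⟩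
  · intro ε hε0 _
    exact ⟨∅, cylAlg_empty, by simp [symmDiff_self, Set.bot_eq_empty, pos_iff_ne_zero.mpr hε0]⟩
  · intro t _ hp ε hε0 hεt
    obtain ⟨U, hU, hlt⟩ := hp ε hε0 hεt
    exact ⟨Uᶜ, cylAlg_compl hU, by rwa [compl_symmDiff_compl]⟩
  · intro seq hseq hp ε hε0 hεt
    have hsm : ∀ n, MeasurableSet (seq n) := fun n => by
      rw [pi_eq_generateFrom_cylAlg]; exact hseq n
    have hε4 : ε / 4 ≠ 0 := by
      simp only [ne_eq, ENNReal.div_eq_zero_iff]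
      push_neg
      exact ⟨hε0, by norm_num⟩
    obtain ⟨δs, hδpos, hδsum⟩ := ENNReal.exists_pos_sum_of_countable' hε4 ℕ
    have hε4t : ε / 4 ≠ ⊤ := (ENNReal.div_lt_top hεt (by norm_num)).ne
    have hδt : ∀ n, δs n ≠ ⊤ := fun n =>
      ne_top_of_lt (lt_of_le_of_lt (ENNReal.le_tsum n) (lt_of_lt_of_le hδsum le_top))
    choose U hUmem hUlt using fun n => hp n (δs n) (hδpos n).ne' (hδt n)
    -- choose a finite stage
    have hiInter : (⋂ N : ℕ, ((⋃ n, seq n) \ ⋃ k ∈ Finset.range N, seq k)) = ∅ := by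
      refine Set.eq_empty_iff_forall_notMem.mpr fun x hx => ?_
      have h0 := Set.mem_iInter.mp hx
      obtain ⟨n, hn⟩ := Set.mem_iUnion.mp (h0 0).1
      exact (h0 (n + 1)).2
        (Set.mem_biUnion (Finset.self_mem_range_succ n) hn)
    have hcont := tendsto_measure_iInter_atTop (μ := mP)
      (s := fun N : ℕ => (⋃ n, seq n) \ ⋃ k ∈ Finset.range N, seq k)
      (fun N => ((MeasurableSet.iUnion hsm).diff
        (MeasurableSet.biUnion (Finset.range N).countable_toSet
          fun k _ => hsm k)).nullMeasurableSet)
      (fun N M hNM => Set.diff_subset_diff_right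
        (Set.biUnion_subset_biUnion_left fun k hk =>
          Finset.mem_range.mpr (lt_of_lt_of_le (Finset.mem_range.mp hk) hNM)))
      ⟨0, measure_ne_top _ _⟩
    rw [hiInter, measure_empty] at hcont
    have hhalfpos : (0 : ℝ≥0∞) < ε / 2 := ENNReal.div_pos hε0 (by norm_num)
    obtain ⟨N, hN⟩ := (hcont.eventually_lt_const hhalfpos).exists
    refine ⟨⋃ k ∈ Finset.range N, U k, cylAlg_biUnion fun k _ => hUmem k, ?_⟩
    have hsub : symmDiff (⋃ n, seq n) (⋃ k ∈ Finset.range N, U k) ⊆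
        ((⋃ n, seq n) \ ⋃ k ∈ Finset.range N, seq k) ∪
          ⋃ k ∈ Finset.range N, symmDiff (seq k) (U k) := by
      intro x hx
      rcases Set.mem_symmDiff.mp hx with ⟨hxT, hxU⟩ | ⟨hxU, hxT⟩
      · by_cases hbU : x ∈ ⋃ k ∈ Finset.range N, seq k
        · obtain ⟨k, hk, hks⟩ := Set.mem_iUnion₂.mp hbU
          exact Or.inr (Set.mem_iUnion₂.mpr ⟨k, hk, Set.mem_symmDiff.mpr
            (Or.inl ⟨hks, fun hUk => hxU (Set.mem_iUnion₂.mpr ⟨k, hk, hUk⟩)⟩)⟩)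
        · exact Or.inl ⟨hxT, hbU⟩
      · obtain ⟨k, hk, hUk⟩ := Set.mem_iUnion₂.mp hxU
        exact Or.inr (Set.mem_iUnion₂.mpr ⟨k, hk, Set.mem_symmDiff.mpr
          (Or.inr ⟨hUk, fun hsk => hxT (Set.mem_iUnion.mpr ⟨k, hsk⟩)⟩)⟩)
    have hb1 : mP ((⋃ n, seq n) \ ⋃ k ∈ Finset.range N, seq k) < ε / 2 := hN
    have hb2 : mP (⋃ k ∈ Finset.range N, symmDiff (seq k) (U k)) ≤ ε / 4 := by
      refine le_trans (measure_biUnion_finset_le _ _) ?_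
      refine le_trans (Finset.sum_le_sum fun k _ => (hUlt k).le) ?_
      exact le_trans (ENNReal.sum_le_tsum _) hδsum.le
    calc mP (symmDiff (⋃ n, seq n) (⋃ k ∈ Finset.range N, U k))
        ≤ mP ((⋃ n, seq n) \ ⋃ k ∈ Finset.range N, seq k) +
            mP (⋃ k ∈ Finset.range N, symmDiff (seq k) (U k)) :=
          le_trans (measure_mono hsub) (measure_union_le _ _)
      _ < ε / 2 + ε / 4 := ENNReal.add_lt_add_of_lt_of_le (measure_ne_top _ _) hb1 hb2
      _ ≤ ε / 2 + ε / 2 := by gcongr <;> norm_num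
      _ = ε := ENNReal.add_halves ε

/-! #### First-hit selector functions -/

open Classical in
/-- `pickAux d W b n y` returns `b k` for the first `k < n` with `y ∈ W k`, else `d`. -/
noncomputable def pickAux {β M : Type} (d : M) : (ℕ → Set β) → (ℕ → M) → ℕ → β → M
  | _, _, 0 => fun _ => d
  | W, b, n + 1 => fun y =>
      if y ∈ W 0 then b 0 else pickAux d (fun i => W (i + 1)) (fun i => b (i + 1)) n y

lemma pickAux_measurable {β M : Type} [MeasurableSpace β] [MeasurableSpace M] (d : M) :
    ∀ (n : ℕ) (W : ℕ → Set β) (b : ℕ → M), (∀ i, MeasurableSet (W i)) →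
      Measurable (pickAux d W b n)
  | 0, W, b, hW => measurable_const
  | n + 1, W, b, hW => by
      have := pickAux_measurable d n (fun i => W (i + 1)) (fun i => b (i + 1))
        (fun i => hW (i + 1))
      exact Measurable.ite (hW 0) measurable_const this

lemma pickAux_eq {β M : Type} (d : M) :
    ∀ (n k : ℕ) (W : ℕ → Set β) (b : ℕ → M) (y : β), k < n → y ∈ W k →
      (∀ j, j < k → y ∉ W j) → pickAux d W b n y = b k
  | 0, k, _, _, _, hk, _, _ => absurd hk (Nat.not_lt_zero k)
  | n + 1, 0, W, b, y, _, hy, _ => by simp [pickAux, hy]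
  | n + 1, k + 1, W, b, y, hk, hy, hmin => by
      have h0 : y ∉ W 0 := hmin 0 (Nat.succ_pos k)
      simp only [pickAux, if_neg h0]
      exact pickAux_eq d n k _ _ y (Nat.lt_of_succ_lt_succ hk) hy
        (fun j hj => hmin (j + 1) (Nat.succ_lt_succ hj))

/-- Approximation of a measurable map into a nice metric space by a finitely-determined
measurable map, in measure. -/
lemma approx_fun {M : Type} [MetricSpace M] [MeasurableSpace M] [BorelSpace M]
    [TopologicalSpace.SeparableSpace M] [Nonempty M]
    (mP : Measure (ι → X)) [IsProbabilityMeasure mP] {f : (ι → X) → M}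
    (hf : Measurable f) {ε : ℝ} (hε : 0 < ε) {η : ℝ≥0∞} (hη : η ≠ 0) (hη' : η ≠ ⊤) :
    ∃ (F : Finset ι) (G₀ : (F → X) → M), Measurable G₀ ∧
      mP {x | ε < dist (f x) (G₀ (projF F x))} < η := by
  classical
  set b : ℕ → M := TopologicalSpace.denseSeq M with hb
  set P : ℕ → Set (ι → X) := fun k =>
    f ⁻¹' (Metric.ball (b k) ε \ ⋃ j ∈ Finset.range k, Metric.ball (b j) ε) with hP
  have hPmeas : ∀ k, MeasurableSet (P k) := fun k =>
    hf (MeasurableSet.diff Metric.isOpen_ball.measurableSet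
      (MeasurableSet.biUnion (Finset.range k).countable_toSet
        fun j _ => Metric.isOpen_ball.measurableSet))
  have hcover : ∀ x, ∃ k, x ∈ P k := by
    intro x
    have hex : ∃ k, f x ∈ Metric.ball (b k) ε := by
      obtain ⟨k, hk⟩ := Metric.denseRange_iff.mp (TopologicalSpace.denseRange_denseSeq M)
        (f x) ε hε
      exact ⟨k, Metric.mem_ball.mpr hk⟩
    refine ⟨Nat.find hex, Nat.find_spec hex, ?_⟩
    intro hmem
    obtain ⟨j, hj, hjball⟩ := Set.mem_iUnion₂.mp hmem
    exact Nat.find_min hex (Finset.mem_range.mp hj) hjball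
  have hη4 : η / 4 ≠ 0 := by
    simp only [ne_eq, ENNReal.div_eq_zero_iff]
    push_neg
    exact ⟨hη, by norm_num⟩
  obtain ⟨δs, hδpos, hδsum⟩ := ENNReal.exists_pos_sum_of_countable' hη4 ℕ
  have hη4t : η / 4 ≠ ⊤ := (ENNReal.div_lt_top hη' (by norm_num)).ne
  have hδt : ∀ n, δs n ≠ ⊤ := fun n =>
    ne_top_of_lt (lt_of_le_of_lt (ENNReal.le_tsum n) (lt_of_lt_of_le hδsum le_top))
  choose U hUmem hUlt using fun k =>
    approx_by_cylAlg mP (hPmeas k) (δs k) (hδpos k).ne' (hδt k)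
  -- choose a finite stage N
  have hiInter : (⋂ N : ℕ, (⋃ k ∈ Finset.range N, P k)ᶜ) = ∅ := by
    refine Set.eq_empty_iff_forall_notMem.mpr fun x hx => ?_
    obtain ⟨k, hk⟩ := hcover x
    exact (Set.mem_iInter.mp hx (k + 1))
      (Set.mem_biUnion (Finset.self_mem_range_succ k) hk)
  have hcont := tendsto_measure_iInter_atTop (μ := mP)
    (s := fun N : ℕ => (⋃ k ∈ Finset.range N, P k)ᶜ)
    (fun N => ((MeasurableSet.biUnion (Finset.range N).countable_toSet
      fun k _ => hPmeas k).compl).nullMeasurableSet)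
    (fun N M hNM => Set.compl_subset_compl.mpr
      (Set.biUnion_subset_biUnion_left fun k hk =>
        Finset.mem_range.mpr (lt_of_lt_of_le (Finset.mem_range.mp hk) hNM)))
    ⟨0, measure_ne_top _ _⟩
  rw [hiInter, measure_empty] at hcont
  have hhalfpos : (0 : ℝ≥0∞) < η / 2 := ENNReal.div_pos hη (by norm_num)
  obtain ⟨N, hN⟩ := (hcont.eventually_lt_const hhalfpos).exists
  -- extract cylinder structure
  choose Fs Vs hVmeas hUeq using hUmem
  set F : Finset ι := (Finset.range N).biUnion Fs with hF
  have hsubF : ∀ k, k < N → Fs k ⊆ F := fun k hk =>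
    Finset.subset_biUnion_of_mem Fs (Finset.mem_range.mpr hk)
  set W : ℕ → Set (F → X) := fun k =>
    if h : k < N then
      (fun (y : F → X) (i : Fs k) => y ⟨i.1, hsubF k h i.2⟩) ⁻¹' Vs k
    else ∅ with hW
  have hWmeas : ∀ k, MeasurableSet (W k) := by
    intro k
    rw [hW]
    by_cases h : k < N
    · simpa [h] using (measurable_pi_lambda _ fun i => measurable_pi_apply _) (hVmeas k)
    · simp [h]
  have hWiff : ∀ k, k < N → ∀ x : ι → X, (projF F x ∈ W k ↔ x ∈ U k) := by
    intro k h x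
    have h1 : (fun i : Fs k => projF F x ⟨i.1, hsubF k h i.2⟩) = projF (Fs k) x := rfl
    simp only [hW, dif_pos h, Set.mem_preimage, h1, hUeq k]
  set G₀ : (F → X) → M := pickAux (b 0) W b N with hG₀
  refine ⟨F, G₀, pickAux_measurable (b 0) N W b hWmeas, ?_⟩
  have hsub : {x | ε < dist (f x) (G₀ (projF F x))} ⊆
      (⋃ k ∈ Finset.range N, P k)ᶜ ∪ ⋃ k ∈ Finset.range N, symmDiff (P k) (U k) := by
    intro x hx
    by_contra hxn
    rw [Set.mem_union, not_or] at hxn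
    obtain ⟨hx1, hx2⟩ := hxn
    have hxR : x ∈ ⋃ k ∈ Finset.range N, P k := by
      by_contra hc; exact hx1 hc
    obtain ⟨k, hkN, hPk⟩ := Set.mem_iUnion₂.mp hxR
    have hiff : ∀ j, j < N → (x ∈ P j ↔ x ∈ U j) := by
      intro j hj
      constructor
      · intro hPj
        by_contra hUj
        exact hx2 (Set.mem_iUnion₂.mpr ⟨j, Finset.mem_range.mpr hj,
          Set.mem_symmDiff.mpr (Or.inl ⟨hPj, hUj⟩)⟩)
      · intro hUj
        by_contra hPj
        exact hx2 (Set.mem_iUnion₂.mpr ⟨j, Finset.mem_range.mpr hj,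
          Set.mem_symmDiff.mpr (Or.inr ⟨hUj, hPj⟩)⟩)
    have hkN' : k < N := Finset.mem_range.mp hkN
    have hGval : G₀ (projF F x) = b k := by
      refine pickAux_eq (b 0) N k W b (projF F x) hkN'
        ((hWiff k hkN' x).mpr ((hiff k hkN').mp hPk)) ?_
      intro j hj
      intro hWj
      have hjN : j < N := lt_trans hj hkN'
      have hUj : x ∈ U j := (hWiff j hjN x).mp hWj
      have hPj : x ∈ P j := (hiff j hjN).mpr hUj
      -- but x ∈ P k means f x avoids ball j for j < k
      have hball : f x ∈ Metric.ball (b j) ε := hPj.1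
      exact hPk.2 (Set.mem_iUnion₂.mpr ⟨j, Finset.mem_range.mpr hj, hball⟩)
    have hdist : dist (f x) (b k) < ε := Metric.mem_ball.mp hPk.1
    have hx' : ε < dist (f x) (G₀ (projF F x)) := hx
    rw [hGval] at hx'
    exact absurd hx' (not_lt.mpr hdist.le)
  have hb2 : mP (⋃ k ∈ Finset.range N, symmDiff (P k) (U k)) ≤ η / 4 := by
    refine le_trans (measure_biUnion_finset_le _ _) ?_
    refine le_trans (Finset.sum_le_sum fun k _ => (hUlt k).le) ?_
    exact le_trans (ENNReal.sum_le_tsum _) hδsum.le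
  calc mP {x | ε < dist (f x) (G₀ (projF F x))}
      ≤ mP ((⋃ k ∈ Finset.range N, P k)ᶜ) +
          mP (⋃ k ∈ Finset.range N, symmDiff (P k) (U k)) :=
        le_trans (measure_mono hsub) (measure_union_le _ _)
    _ < η / 2 + η / 4 := ENNReal.add_lt_add_of_lt_of_le (measure_ne_top _ _) hN hb2
    _ ≤ η / 2 + η / 2 := by gcongr <;> norm_num
    _ = η := ENNReal.add_halves η

end Statement18Aux

/-! ### Signed indicator sums and the almost-invariant-set cocycle -/

section ESum

open MeasurableSpace

variable {Γ : Type} [Group Γ] {X : Type} [MeasurableSpace X]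

open Classical in
/-- Signed indicator coefficient of the pair of sets `U`, `S` at `δ`. -/
noncomputable def coefI (U S : Set Γ) (δ : Γ) : ℤ := (if δ ∈ U then 1 else 0) - (if δ ∈ S then 1 else 0)

open Classical in
/-- The signed count of coordinates in `W` lying in `A`, weighted by `coefI U S`. -/
noncomputable def eSum (U S : Set Γ) (A : Set X) (W : Finset Γ) (x : Γ → X) : ℤ :=
  ∑ δ ∈ W, if x δ ∈ A then coefI U S δ else 0

lemma coefI_eq_zero {U S : Set Γ} {δ : Γ} (h : δ ∉ symmDiff U S) : coefI U S δ = 0 := by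
  rw [Set.mem_symmDiff] at h
  push_neg at h
  by_cases h1 : δ ∈ U
  · simp [coefI, h1, h.1 h1]
  · have h2 : δ ∉ S := fun hS => h1 (h.2 hS)
    simp [coefI, h1, h2]

lemma eSum_congr {U S : Set Γ} {A : Set X} {W W' : Finset Γ}
    (hW : symmDiff U S ⊆ ↑W) (hW' : symmDiff U S ⊆ ↑W') (x : Γ → X) :
    eSum U S A W x = eSum U S A W' x := by
  classical
  have k1 : eSum U S A W x = eSum U S A (W ∪ W') x :=
    Finset.sum_subset Finset.subset_union_left (fun δ _ hδ => by
      have hδ' : δ ∉ symmDiff U S := fun hc => hδ (Finset.mem_coe.mp (hW hc))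
      simp [coefI_eq_zero hδ'])
  have k2 : eSum U S A W' x = eSum U S A (W ∪ W') x :=
    Finset.sum_subset Finset.subset_union_right (fun δ _ hδ => by
      have hδ' : δ ∉ symmDiff U S := fun hc => hδ (Finset.mem_coe.mp (hW' hc))
      simp [coefI_eq_zero hδ'])
  rw [k1, k2]

lemma symmDiff_preimage (h : Γ) (U S : Set Γ) :
    symmDiff ((h * ·) ⁻¹' U) ((h * ·) ⁻¹' S) = (h * ·) ⁻¹' symmDiff U S := by
  ext δ
  simp [Set.mem_symmDiff]

lemma eSum_shift [DecidableEq Γ] {U S : Set Γ} {A : Set X} (W : Finset Γ) (h : Γ)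
    (x : Γ → X) :
    eSum U S A W (shiftS h x)
      = eSum ((h * ·) ⁻¹' U) ((h * ·) ⁻¹' S) A (W.image fun δ => h⁻¹ * δ) x := by
  rw [eSum, eSum, Finset.sum_image (fun a _ b _ hab => by
    have := congrArg (fun z => h * z) hab
    simpa using this)]
  refine Finset.sum_congr rfl fun δ _ => ?_
  have hx : shiftS h x δ = x (h⁻¹ * δ) := by
    show x (h⁻¹ • δ) = x (h⁻¹ * δ)
    rw [smul_eq_mul]
  rw [hx]
  by_cases hxa : x (h⁻¹ * δ) ∈ A
  · rw [if_pos hxa, if_pos hxa]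
    show coefI U S δ = coefI ((h * ·) ⁻¹' U) ((h * ·) ⁻¹' S) (h⁻¹ * δ)
    rw [coefI, coefI]
    by_cases hU : δ ∈ U <;> by_cases hS2 : δ ∈ S <;>
      simp [Set.mem_preimage, mul_inv_cancel_left, hU, hS2]
  · rw [if_neg hxa, if_neg hxa]

lemma measurableSet_dist_le {β K : Type} [MetricSpace K] {m : MeasurableSpace β}
    [MeasurableSpace K] [OpensMeasurableSpace K] [SecondCountableTopology K]
    {f g : β → K} (hf : Measurable[m] f) (hg : Measurable[m] g) (r : ℝ) :
    MeasurableSet[m] {x | dist (f x) (g x) ≤ r} := by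
  letI := m
  exact measurableSet_le (hf.dist hg) measurable_const

lemma eSum_measurable {m : MeasurableSpace (Γ → X)} (U S : Set Γ) {A : Set X}
    (hA : MeasurableSet A) (W : Finset Γ)
    (hev : ∀ δ ∈ W, Measurable[m] fun x : Γ → X => x δ) :
    Measurable[m] (eSum U S A W) := by
  apply Finset.measurable_sum
  intro δ hδ
  exact Measurable.ite (hev δ hδ hA) measurable_const measurable_const

lemma eSum_cocycle {S : Set Γ} {A : Set X}
    (hfin : ∀ γ : Γ, (symmDiff ((γ * ·) ⁻¹' S) S).Finite) (g h : Γ) (x : Γ → X) :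
    eSum ((g * h * ·) ⁻¹' S) S A (hfin (g * h)).toFinset x
      = eSum ((g * ·) ⁻¹' S) S A (hfin g).toFinset (shiftS h x)
        + eSum ((h * ·) ⁻¹' S) S A (hfin h).toFinset x := by
  classical
  rw [eSum_shift]
  have hpre : (h * ·) ⁻¹' ((g * ·) ⁻¹' S) = (g * h * ·) ⁻¹' S := by
    ext δ; simp [mul_assoc]
  rw [hpre]
  set W : Finset Γ := (hfin (g * h)).toFinset ∪
      ((hfin g).toFinset.image fun δ => h⁻¹ * δ) ∪ (hfin h).toFinset with hWdef
  have hD₁ : symmDiff ((g * h * ·) ⁻¹' S) S ⊆ ↑((hfin (g * h)).toFinset) := by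
    rw [Set.Finite.coe_toFinset]
  have h₁ : symmDiff ((g * h * ·) ⁻¹' S) S ⊆ ↑W := by
    intro δ hδ
    have hm : δ ∈ (hfin (g * h)).toFinset := (hfin (g * h)).mem_toFinset.mpr hδ
    simp only [hWdef, Finset.coe_union, Set.mem_union, Finset.mem_coe]
    exact Or.inl (Or.inl hm)
  have h₂ : symmDiff ((g * h * ·) ⁻¹' S) ((h * ·) ⁻¹' S) ⊆
      ↑((hfin g).toFinset.image fun δ => h⁻¹ * δ) := by
    intro δ hδ
    rw [← hpre, symmDiff_preimage] at hδ
    have hmem : h * δ ∈ symmDiff ((g * ·) ⁻¹' S) S := hδ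
    exact Finset.mem_coe.mpr (Finset.mem_image.mpr
      ⟨h * δ, (hfin g).mem_toFinset.mpr hmem, by rw [inv_mul_cancel_left]⟩)
  have h₂' : symmDiff ((g * h * ·) ⁻¹' S) ((h * ·) ⁻¹' S) ⊆ ↑W := by
    refine h₂.trans ?_
    intro z hz
    simp only [hWdef, Finset.coe_union, Set.mem_union]
    exact Or.inl (Or.inr hz)
  have hD₃ : symmDiff ((h * ·) ⁻¹' S) S ⊆ ↑((hfin h).toFinset) := by
    rw [Set.Finite.coe_toFinset]
  have h₃ : symmDiff ((h * ·) ⁻¹' S) S ⊆ ↑W := by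
    intro δ hδ
    have hm : δ ∈ (hfin h).toFinset := (hfin h).mem_toFinset.mpr hδ
    simp only [hWdef, Finset.coe_union, Set.mem_union, Finset.mem_coe]
    exact Or.inr hm
  rw [eSum_congr hD₁ h₁ x, eSum_congr h₂ h₂' x, eSum_congr hD₃ h₃ x,
    eSum, eSum, eSum, ← Finset.sum_add_distrib]
  refine Finset.sum_congr rfl fun δ _ => ?_
  by_cases hx : x δ ∈ A
  · simp only [if_pos hx, coefI]
    ring
  · simp [hx]

end ESum

/-! ### A probability measure on a standard Borel space which is not a point mass -/

section Middle

lemma exists_middle_set {X : Type} [MeasurableSpace X] [StandardBorelSpace X]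
    (μ : MeasureTheory.Measure X) [MeasureTheory.IsProbabilityMeasure μ]
    (hnd : ¬ ∃ x : X, μ {x} = 1) :
    ∃ A : Set X, MeasurableSet A ∧ 0 < μ A ∧ μ A < 1 := by
  classical
  by_contra hcon
  push_neg at hcon
  have h01 : ∀ A : Set X, MeasurableSet A → μ A = 0 ∨ μ A = 1 := by
    intro A hA
    rcases eq_or_ne (μ A) 0 with h | h
    · exact Or.inl h
    · exact Or.inr (le_antisymm prob_le_one (hcon A hA (pos_iff_ne_zero.mpr h)))
  obtain ⟨S, hScnt, hSmeas, hSsep⟩ :=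
    (inferInstance : HasCountableSeparatingOn X MeasurableSet Set.univ).1
  set T : Set (Set X) := {U | U ∈ S ∧ μ U = 1} ∪ compl '' {U | U ∈ S ∧ μ U = 0} with hT
  have hTcnt : T.Countable :=
    ((hScnt.mono fun U hU => hU.1).union ((hScnt.mono fun U hU => hU.1).image compl))
  have hTmeas : ∀ U ∈ T, MeasurableSet U := by
    rintro U (⟨hUS, -⟩ | ⟨V, ⟨hVS, -⟩, rfl⟩)
    exacts [hSmeas U hUS, (hSmeas V hVS).compl]
  have hTconull : ∀ U ∈ T, μ Uᶜ = 0 := by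
    rintro U (⟨hUS, hU1⟩ | ⟨V, ⟨hVS, hV0⟩, rfl⟩)
    · rw [measure_compl (hSmeas U hUS) (measure_ne_top μ U), hU1, measure_univ, tsub_self]
    · simpa using hV0
  have hCc : μ (⋂₀ T)ᶜ = 0 := by
    rw [Set.compl_sInter, Set.sUnion_image]
    exact (measure_biUnion_null_iff hTcnt).mpr hTconull
  have hC1 : μ (⋂₀ T) = 1 := by
    have h := measure_add_measure_compl (μ := μ) (MeasurableSet.sInter hTcnt hTmeas)
    rw [hCc, measure_univ, add_zero] at h
    exact h
  obtain ⟨x₀, hx₀⟩ := MeasureTheory.nonempty_of_measure_ne_zero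
    (show μ (⋂₀ T) ≠ 0 by rw [hC1]; exact one_ne_zero)
  have hsub : ⋂₀ T ⊆ {x₀} := by
    intro y hy
    have hxy : x₀ = y := by
      refine hSsep x₀ (Set.mem_univ _) y (Set.mem_univ _) fun U hU => ?_
      rcases h01 U (hSmeas U hU) with h0 | h1
      · have hUc : Uᶜ ∈ T := Or.inr ⟨U, ⟨hU, h0⟩, rfl⟩
        exact iff_of_false (Set.mem_sInter.mp hx₀ Uᶜ hUc) (Set.mem_sInter.mp hy Uᶜ hUc)
      · have hUT : U ∈ T := Or.inl ⟨hU, h1⟩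
        exact iff_of_true (Set.mem_sInter.mp hx₀ U hUT) (Set.mem_sInter.mp hy U hUT)
    exact Set.mem_singleton_iff.mpr hxy.symm
  exact hnd ⟨x₀, le_antisymm prob_le_one (hC1 ▸ measure_mono hsub)⟩

end Middle

/-- If the Bernoulli shift of `Γ` over a non-point-mass base is `L`-cocycle
superrigid for some nontrivial Polish group `L` with a compatible bi-invariant metric, then
`Γ` has at most one end: every almost invariant subset of `Γ` is finite or cofinite. -/
theorem at_most_one_end_of_bernoulli_cocycle_superrigid
    (Γ : Type) [Group Γ] [Countable Γ]
    (X : Type) [MeasurableSpace X] [StandardBorelSpace X] (μ : Measure X)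
    [IsProbabilityMeasure μ] (hnd : ¬ ∃ x : X, μ {x} = 1)
    (L : Type) [Group L] [MetricSpace L] [PolishSpace L] [MeasurableSpace L] [BorelSpace L]
    [Nontrivial L]
    (hbi : ∀ g h x y : L, dist (g * x * h) (g * y * h) = dist x y)
    (μΓ : Measure (Γ → X)) (hμΓ : IsProductMeasure μ μΓ)
    (hsr : IsCocycleSuperrigid L (shiftS : Γ → (Γ → X) → (Γ → X)) μΓ) :
    ∀ S : Set Γ, (∀ γ : Γ, (symmDiff ((γ * ·) '' S) S).Finite) → S.Finite ∨ Sᶜ.Finite := by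
  classical
  intro S hS
  by_contra hcon
  push_neg at hcon
  obtain ⟨hSinf, hScinf⟩ := hcon
  haveI hprobΓ : IsProbabilityMeasure μΓ := hμΓ.1
  obtain ⟨A, hA, hA0, hA1⟩ := exists_middle_set μ hnd
  -- a nontrivial element of L
  obtain ⟨l₀, l₁, hl01⟩ := exists_pair_ne L
  set ℓ : L := l₀ * l₁⁻¹ with hℓdef
  have hℓ : ℓ ≠ 1 := by
    simp only [hℓdef, ne_eq, mul_inv_eq_one]
    exact hl01
  have hdpos : 0 < dist ℓ 1 := dist_pos.mpr hℓ
  -- metric facts about L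
  have hinvdist : ∀ u v : L, dist u⁻¹ v⁻¹ = dist v u := by
    intro u v
    have h := hbi u v u⁻¹ v⁻¹
    rw [mul_inv_cancel, one_mul, inv_mul_cancel_right] at h
    exact h.symm
  haveI hMM : MeasurableMul₂ L := by
    have hlip : LipschitzWith 2 (fun p : L × L => p.1 * p.2) := by
      apply LipschitzWith.of_dist_le_mul
      intro p q
      have h1 : dist (p.1 * p.2) (q.1 * p.2) = dist p.1 q.1 := by
        have h := hbi 1 p.2 p.1 q.1
        rwa [one_mul, one_mul] at h
      have h2 : dist (q.1 * p.2) (q.1 * q.2) = dist p.2 q.2 := by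
        have h := hbi q.1 1 p.2 q.2
        rwa [mul_one, mul_one] at h
      have hm1 : dist p.1 q.1 ≤ dist p q := by
        rw [Prod.dist_eq]; exact le_max_left _ _
      have hm2 : dist p.2 q.2 ≤ dist p q := by
        rw [Prod.dist_eq]; exact le_max_right _ _
      calc dist (p.1 * p.2) (q.1 * q.2)
          ≤ dist (p.1 * p.2) (q.1 * p.2) + dist (q.1 * p.2) (q.1 * q.2) :=
            dist_triangle _ _ _
        _ = dist p.1 q.1 + dist p.2 q.2 := by rw [h1, h2]
        _ ≤ dist p q + dist p q := add_le_add hm1 hm2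
        _ = 2 * dist p q := (two_mul _).symm
        _ = ((2 : NNReal) : ℝ) * dist p q := by norm_num
    exact ⟨hlip.continuous.measurable⟩
  haveI hMI : MeasurableInv L := by
    have hlip : LipschitzWith 1 (fun u : L => u⁻¹) := by
      apply LipschitzWith.of_dist_le_mul
      intro u v
      rw [hinvdist u v, dist_comm]
      simp
    exact ⟨hlip.continuous.measurable⟩
  -- finiteness of symmetric differences of preimages
  have hfin : ∀ γ : Γ, (symmDiff ((γ * ·) ⁻¹' S) S).Finite := by
    intro γ
    have himg : ((γ * ·) ⁻¹' S) = (γ⁻¹ * ·) '' S := by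
      ext δ
      constructor
      · intro hδ
        exact ⟨γ * δ, hδ, inv_mul_cancel_left γ δ⟩
      · rintro ⟨s, hs, rfl⟩
        simpa [mul_inv_cancel_left] using hs
    rw [himg]
    exact hS γ⁻¹
  -- the cocycle
  set e : Γ → (Γ → X) → ℤ := fun γ => eSum ((γ * ·) ⁻¹' S) S A (hfin γ).toFinset with hedef
  set c : Γ → (Γ → X) → L := fun γ x => ℓ ^ e γ x with hcdef
  have hccocycle : IsCocycle (shiftS : Γ → (Γ → X) → (Γ → X)) μΓ c := by
    constructor
    · intro γ
      exact (measurable_of_countable fun n : ℤ => ℓ ^ n).comp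
        (eSum_measurable _ _ hA _ fun δ _ => measurable_pi_apply δ)
    · intro g h
      refine MeasureTheory.ae_of_all _ fun x => ?_
      show ℓ ^ e (g * h) x = ℓ ^ e g (shiftS h x) * ℓ ^ e h x
      rw [show e (g * h) x = e g (shiftS h x) + e h x from eSum_cocycle hfin g h x,
        zpow_add]
  obtain ⟨ρ, f, hfmeas, huntw⟩ := hsr c hccocycle
  -- measures of A and choice of thresholds
  set p : ℝ≥0∞ := μ A with hpdef
  set q : ℝ≥0∞ := μ Aᶜ with hqdef
  have hpt : p ≠ ⊤ := measure_ne_top μ A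
  have hqt : q ≠ ⊤ := measure_ne_top μ Aᶜ
  have hp0 : p ≠ 0 := hA0.ne'
  have hq0 : q ≠ 0 := by
    rw [hqdef, measure_compl hA (measure_ne_top μ A), measure_univ]
    exact (tsub_pos_of_lt hA1).ne'
  have hpq : p + q = 1 := by
    rw [hpdef, hqdef, measure_add_measure_compl hA, measure_univ]
  set η : ℝ≥0∞ := p * q * 16⁻¹ with hηdef
  have hη0 : η ≠ 0 := by
    refine mul_ne_zero (mul_ne_zero hp0 hq0) ?_
    simp
  have hηt : η ≠ ⊤ := by
    refine ENNReal.mul_ne_top (ENNReal.mul_ne_top hpt hqt) ?_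
    simp
  set ε' : ℝ := dist ℓ 1 / 5 with hε'def
  have hε'pos : 0 < ε' := div_pos hdpos (by norm_num)
  obtain ⟨F, G₀, hG₀, happrox⟩ := approx_fun μΓ hfmeas hε'pos hη0 hηt
  -- choose the moving coordinate δ₀ and the group element γ
  obtain ⟨δ₀, hδ₀S, hδ₀F⟩ := (Set.Infinite.diff hSinf F.finite_toSet).nonempty
  obtain ⟨t, htS, htF⟩ := (Set.Infinite.diff hScinf F.finite_toSet).nonempty
  set γ : Γ := t * δ₀⁻¹ with hγdef
  have hγδ₀ : γ * δ₀ = t := by rw [hγdef, inv_mul_cancel_right]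
  have hδ₀U : δ₀ ∉ (γ * ·) ⁻¹' S := by
    intro hc
    exact htS (hγδ₀ ▸ hc)
  have hδ₀D : δ₀ ∈ (hfin γ).toFinset :=
    (hfin γ).mem_toFinset.mpr (Set.mem_symmDiff.mpr (Or.inr ⟨hδ₀S, hδ₀U⟩))
  -- split off the δ₀ coordinate
  set e' : (Γ → X) → ℤ := eSum ((γ * ·) ⁻¹' S) S A ((hfin γ).toFinset.erase δ₀) with he'def
  have hsplit : ∀ x : Γ → X, e γ x = (if x δ₀ ∈ A then (-1 : ℤ) else 0) + e' x := by
    intro x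
    have hcoef : coefI ((γ * ·) ⁻¹' S) S δ₀ = -1 := by
      simp [coefI, hδ₀U, hδ₀S]
    have hadd := Finset.add_sum_erase ((hfin γ).toFinset)
      (fun δ => if x δ ∈ A then coefI ((γ * ·) ⁻¹' S) S δ else 0) hδ₀D
    calc e γ x = (if x δ₀ ∈ A then coefI ((γ * ·) ⁻¹' S) S δ₀ else 0) + e' x := hadd.symm
      _ = (if x δ₀ ∈ A then (-1 : ℤ) else 0) + e' x := by rw [hcoef]
  set w : (Γ → X) → L := fun x => ℓ ^ e' x with hwdef
  set wl : (Γ → X) → L := fun x => ℓ ^ e' x * ℓ⁻¹ with hwldef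
  have hcw1 : ∀ x : Γ → X, x δ₀ ∈ A → c γ x = wl x := by
    intro x hx
    show ℓ ^ e γ x = ℓ ^ e' x * ℓ⁻¹
    rw [hsplit x, if_pos hx, add_comm, zpow_add, zpow_neg_one]
  have hcw0 : ∀ x : Γ → X, x δ₀ ∉ A → c γ x = w x := by
    intro x hx
    show ℓ ^ e γ x = ℓ ^ e' x
    rw [hsplit x, if_neg hx, zero_add]
  -- comparison function
  set g : (Γ → X) → L := fun x => G₀ (projF F x) with hgdef
  set gs : (Γ → X) → L := fun x => G₀ (fun i : F => x (γ⁻¹ * ↑i)) with hgsdef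
  have hgs : ∀ x : Γ → X, g (shiftS γ x) = gs x := by
    intro x
    show G₀ (projF F (shiftS γ x)) = G₀ (fun i : F => x (γ⁻¹ * ↑i))
    congr 1
  set G : (Γ → X) → L := fun x => (gs x)⁻¹ * ρ γ * g x with hGdef
  -- measurability with respect to the coordinates away from δ₀
  have hev : ∀ δ : Γ, δ ≠ δ₀ →
      Measurable[MeasurableSpace.generateFrom (cylFam (X := X) fun i : Γ => i ≠ δ₀)]
        fun x : Γ → X => x δ := fun δ hδ => measurable_eval_cylFam _ hδ
  have he'M : Measurable[MeasurableSpace.generateFrom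
      (cylFam (X := X) fun i : Γ => i ≠ δ₀)] e' := by
    refine eSum_measurable _ _ hA _ fun δ hδ => hev δ ?_
    exact Finset.ne_of_mem_erase hδ
  have hwM : Measurable[MeasurableSpace.generateFrom
      (cylFam (X := X) fun i : Γ => i ≠ δ₀)] w :=
    (measurable_of_countable fun n : ℤ => ℓ ^ n).comp he'M
  have hwlM : Measurable[MeasurableSpace.generateFrom
      (cylFam (X := X) fun i : Γ => i ≠ δ₀)] wl :=
    (measurable_of_countable fun n : ℤ => ℓ ^ n * ℓ⁻¹).comp he'M
  have hgM : Measurable[MeasurableSpace.generateFrom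
      (cylFam (X := X) fun i : Γ => i ≠ δ₀)] g := by
    refine hG₀.comp (measurable_proj_cylFam F id fun i => ?_)
    exact fun hc => hδ₀F (Finset.mem_coe.mpr (by rw [← hc]; exact i.2))
  have hgsM : Measurable[MeasurableSpace.generateFrom
      (cylFam (X := X) fun i : Γ => i ≠ δ₀)] gs := by
    refine hG₀.comp (measurable_proj_cylFam F (fun δ => γ⁻¹ * δ) fun i => ?_)
    intro hc
    have hit : (↑i : Γ) = t := by rw [← hγδ₀, ← hc, mul_inv_cancel_left]
    exact htF (Finset.mem_coe.mpr (by rw [← hit]; exact i.2))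
  have hGM : Measurable[MeasurableSpace.generateFrom
      (cylFam (X := X) fun i : Γ => i ≠ δ₀)] G := (hgsM.inv.mul measurable_const).mul hgM
  set E₁ : Set (Γ → X) := {x | dist (wl x) (G x) ≤ ε' + ε'} with hE₁def
  set E₀ : Set (Γ → X) := {x | dist (w x) (G x) ≤ ε' + ε'} with hE₀def
  have hE₁meas : MeasurableSet[MeasurableSpace.generateFrom
      (cylFam (X := X) fun i : Γ => i ≠ δ₀)] E₁ :=
    measurableSet_dist_le hwlM hGM _
  have hE₀meas : MeasurableSet[MeasurableSpace.generateFrom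
      (cylFam (X := X) fun i : Γ => i ≠ δ₀)] E₀ :=
    measurableSet_dist_le hwM hGM _
  -- the good event
  set Bad : Set (Γ → X) := {x | ε' < dist (f x) (g x)} with hBaddef
  have hBadmeas : MeasurableSet Bad :=
    measurableSet_lt measurable_const (hfmeas.dist (hG₀.comp (measurable_projF F)))
  have hBadlt : μΓ Bad < η := happrox
  set Bad₂ : Set (Γ → X) := (shiftS γ : (Γ → X) → (Γ → X)) ⁻¹' Bad with hBad₂def
  have hBad₂lt : μΓ Bad₂ < η := by
    rw [hBad₂def,
      (shiftS_measurePreserving hμΓ γ).measure_preimage hBadmeas.nullMeasurableSet]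
    exact hBadlt
  set Eq₀ : Set (Γ → X) := {x | f (shiftS γ x) * c γ x * (f x)⁻¹ = ρ γ} with hEq₀def
  set E : Set (Γ → X) := Eq₀ ∩ (Badᶜ ∩ Bad₂ᶜ) with hEdef
  have hEc : μΓ Eᶜ ≤ η + η := by
    have hcompl : Eᶜ = Eq₀ᶜ ∪ (Bad ∪ Bad₂) := by
      rw [hEdef, Set.compl_inter, Set.compl_inter, compl_compl, compl_compl]
    rw [hcompl]
    have h0 : μΓ Eq₀ᶜ = 0 := by
      have h := huntw γ
      rw [MeasureTheory.ae_iff] at h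
      exact h
    calc μΓ (Eq₀ᶜ ∪ (Bad ∪ Bad₂)) ≤ μΓ Eq₀ᶜ + μΓ (Bad ∪ Bad₂) := measure_union_le _ _
      _ ≤ 0 + (μΓ Bad + μΓ Bad₂) := by
          rw [h0]
          exact add_le_add le_rfl (measure_union_le _ _)
      _ ≤ η + η := by
          rw [zero_add]
          exact add_le_add hBadlt.le hBad₂lt.le
  -- on E the cocycle is close to G
  have hEsub : ∀ x ∈ E, dist (c γ x) (G x) ≤ ε' + ε' := by
    intro x hx
    obtain ⟨hx1, hx2, hx3⟩ := hx
    have hx1' : f (shiftS γ x) * c γ x * (f x)⁻¹ = ρ γ := hx1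
    have hx2' : dist (f x) (g x) ≤ ε' := not_lt.mp hx2
    have hx3' : dist (f (shiftS γ x)) (g (shiftS γ x)) ≤ ε' := not_lt.mp hx3
    have hceq : c γ x = (f (shiftS γ x))⁻¹ * (ρ γ * f x) := by
      rw [← hx1']
      group
    have hd1 : dist (c γ x) ((gs x)⁻¹ * (ρ γ * f x)) ≤ ε' := by
      rw [hceq]
      have h := hbi 1 (ρ γ * f x) (f (shiftS γ x))⁻¹ (gs x)⁻¹
      rw [one_mul, one_mul] at h
      calc dist ((f (shiftS γ x))⁻¹ * (ρ γ * f x)) ((gs x)⁻¹ * (ρ γ * f x))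
          = dist (f (shiftS γ x))⁻¹ (gs x)⁻¹ := h
        _ = dist (gs x) (f (shiftS γ x)) := hinvdist _ _
        _ = dist (f (shiftS γ x)) (g (shiftS γ x)) := by rw [hgs x, dist_comm]
        _ ≤ ε' := hx3'
    have hd2 : dist ((gs x)⁻¹ * (ρ γ * f x)) (G x) ≤ ε' := by
      have h := hbi ((gs x)⁻¹ * ρ γ) 1 (f x) (g x)
      rw [mul_one, mul_one] at h
      have hGx : G x = (gs x)⁻¹ * ρ γ * g x := rfl
      rw [hGx, ← mul_assoc, h]
      exact hx2'
    calc dist (c γ x) (G x)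
        ≤ dist (c γ x) ((gs x)⁻¹ * (ρ γ * f x)) + dist ((gs x)⁻¹ * (ρ γ * f x)) (G x) :=
          dist_triangle _ _ _
      _ ≤ ε' + ε' := add_le_add hd1 hd2
  have hE₁sub : ({x : Γ → X | x δ₀ ∈ A} ∩ E₁ᶜ) ⊆ Eᶜ := by
    intro x hx hxE
    refine hx.2 ?_
    have h := hEsub x hxE
    rw [hcw1 x hx.1] at h
    exact h
  have hE₀sub : ({x : Γ → X | x δ₀ ∈ Aᶜ} ∩ E₀ᶜ) ⊆ Eᶜ := by
    intro x hx hxE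
    refine hx.2 ?_
    have h := hEsub x hxE
    rw [hcw0 x hx.1] at h
    exact h
  -- independence bounds
  have hkey₁ : p * μΓ E₁ᶜ ≤ η + η := by
    have h := indep_coordinate hμΓ δ₀ hA hE₁meas.compl
    calc p * μΓ E₁ᶜ = μΓ ({x | x δ₀ ∈ A} ∩ E₁ᶜ) := h.symm
      _ ≤ μΓ Eᶜ := measure_mono hE₁sub
      _ ≤ η + η := hEc
  have hkey₀ : q * μΓ E₀ᶜ ≤ η + η := by
    have h := indep_coordinate hμΓ δ₀ hA.compl hE₀meas.compl
    calc q * μΓ E₀ᶜ = μΓ ({x | x δ₀ ∈ Aᶜ} ∩ E₀ᶜ) := h.symm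
      _ ≤ μΓ Eᶜ := measure_mono hE₀sub
      _ ≤ η + η := hEc
  -- numerics
  have h16 : (16 : ℝ≥0∞)⁻¹ + 16⁻¹ = 8⁻¹ := by
    rw [← two_mul, show (16 : ℝ≥0∞) = 8 * 2 from by norm_num,
      ENNReal.mul_inv (Or.inl (by norm_num)) (Or.inl (by norm_num)), mul_comm,
      mul_assoc, ENNReal.inv_mul_cancel (by norm_num) (by norm_num), mul_one]
  have hηη : η + η = p * q * 8⁻¹ := by
    rw [hηdef, ← mul_add, h16]
  have hbound₁ : μΓ E₁ᶜ ≤ q * 8⁻¹ := by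
    have h : p * μΓ E₁ᶜ ≤ p * (q * 8⁻¹) := by
      rw [← mul_assoc]
      exact hηη ▸ hkey₁
    exact (ENNReal.mul_le_mul_iff_right hp0 hpt).mp h
  have hbound₀ : μΓ E₀ᶜ ≤ p * 8⁻¹ := by
    have h : q * μΓ E₀ᶜ ≤ q * (p * 8⁻¹) := by
      rw [← mul_assoc, mul_comm q p]
      exact hηη ▸ hkey₀
    exact (ENNReal.mul_le_mul_iff_right hq0 hqt).mp h
  have hsum : μΓ E₀ᶜ + μΓ E₁ᶜ ≤ 8⁻¹ := by
    calc μΓ E₀ᶜ + μΓ E₁ᶜ ≤ p * 8⁻¹ + q * 8⁻¹ := add_le_add hbound₀ hbound₁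
      _ = (p + q) * 8⁻¹ := (add_mul _ _ _).symm
      _ = 8⁻¹ := by rw [hpq, one_mul]
  have hne : (E₀ ∩ E₁).Nonempty := by
    refine MeasureTheory.nonempty_of_measure_ne_zero (μ := μΓ) (s := E₀ ∩ E₁) ?_
    intro hzero
    have h1 : (1 : ℝ≥0∞) ≤ 8⁻¹ := by
      calc (1 : ℝ≥0∞) = μΓ Set.univ := measure_univ.symm
        _ ≤ μΓ (E₀ ∩ E₁) + μΓ ((E₀ ∩ E₁)ᶜ) := by
            conv_lhs => rw [← Set.union_compl_self (E₀ ∩ E₁)]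
            exact measure_union_le _ _
        _ ≤ μΓ (E₀ ∩ E₁) + (μΓ E₀ᶜ + μΓ E₁ᶜ) := by
            refine add_le_add le_rfl ?_
            rw [Set.compl_inter]
            exact measure_union_le _ _
        _ ≤ 0 + 8⁻¹ := by
            rw [hzero]
            exact add_le_add le_rfl hsum
        _ = 8⁻¹ := zero_add _
    exact absurd h1 (not_le.mpr (ENNReal.inv_lt_one.mpr (by norm_num)))
  obtain ⟨x₀, hx₀E₀, hx₀E₁⟩ := hne
  -- final contradiction
  have hx₀E₀' : dist (w x₀) (G x₀) ≤ ε' + ε' := hx₀E₀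
  have hx₀E₁' : dist (wl x₀) (G x₀) ≤ ε' + ε' := hx₀E₁
  have hd : dist (wl x₀) (w x₀) ≤ ε' + ε' + (ε' + ε') := by
    calc dist (wl x₀) (w x₀) ≤ dist (wl x₀) (G x₀) + dist (G x₀) (w x₀) :=
          dist_triangle _ _ _
      _ ≤ ε' + ε' + (ε' + ε') := add_le_add hx₀E₁' (by rw [dist_comm]; exact hx₀E₀')
  have hwd : dist (wl x₀) (w x₀) = dist ℓ 1 := by
    have h := hbi (ℓ ^ e' x₀) 1 ℓ⁻¹ 1
    rw [mul_one, mul_one, mul_one] at h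
    have h2 : dist (ℓ⁻¹ : L) 1 = dist ℓ 1 := by
      have h3 := hbi ℓ 1 ℓ⁻¹ 1
      rw [mul_one, mul_one, mul_one, mul_inv_cancel] at h3
      rw [← h3, dist_comm]
    show dist (ℓ ^ e' x₀ * ℓ⁻¹) (ℓ ^ e' x₀) = dist ℓ 1
    rw [h, h2]
  rw [hwd] at hd
  rw [hε'def] at hd
  linarith [hdpos]

end OEW
end
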